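/- arXiv:2111.15256 — 4 statements merged into one kernel-verified Lean document; each statement's English description precedes it below -/
import Mathlib

section
/- For every real z with |z| ≤ 1, z · arcsin(z) + √(1 − z²) = 1 + Σ_{n=0}^{∞} binom(2n, n) · z^{2n+2} / ( 2^{2n} (2n+1)(2n+2) ), and the series on the right converges absolutely for |z| ≤ 1. -/
open Real Topology

noncomputable def mycc (n : ℕ) : ℝ := (Nat.choose (2*n) n : ℝ) / 2^(2*n)

lemma mycc_nonneg (n : ℕ) : 0 ≤ mycc n := by unfold mycc; positivity

lemma mycc_zero : mycc 0 = 1 := by simp [mycc]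

lemma mycc_rec (n : ℕ) : (2*(n:ℝ)+2) * mycc (n+1) = (2*(n:ℝ)+1) * mycc n := by
  have h := Nat.succ_mul_centralBinom_succ n
  unfold Nat.centralBinom at h
  have h' : ((n:ℝ)+1) * (Nat.choose (2*(n+1)) (n+1) : ℝ)
      = 2 * (2*(n:ℝ)+1) * (Nat.choose (2*n) n : ℝ) := by exact_mod_cast congrArg (Nat.cast (R := ℝ)) h
  have hp : (2:ℝ)^(2*(n+1)) = 4 * 2^(2*n) := by
    have e : 2*(n+1) = 2*n+1+1 := by ring
    rw [e, pow_succ, pow_succ]; ring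
  unfold mycc
  rw [hp]
  have h2 : (2:ℝ)^(2*n) ≠ 0 := by positivity
  field_simp
  linear_combination 2 * h'

lemma mycc_le_one (n : ℕ) : mycc n ≤ 1 := by
  induction n with
  | zero => simp [mycc_zero]
  | succ n ih =>
    have h := mycc_rec n
    have h1 : (0:ℝ) < 2*(n:ℝ)+2 := by positivity
    nlinarith [mycc_nonneg n, mycc_nonneg (n+1)]

noncomputable def t0 (n : ℕ) (x : ℝ) : ℝ := mycc n * x^(2*n+2) / ((2*(n:ℝ)+1)*(2*(n:ℝ)+2))
noncomputable def t1 (n : ℕ) (x : ℝ) : ℝ := mycc n * x^(2*n+1) / (2*(n:ℝ)+1)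
noncomputable def t2 (n : ℕ) (x : ℝ) : ℝ := mycc n * x^(2*n)
noncomputable def t3 (n : ℕ) (x : ℝ) : ℝ := mycc n * (2*(n:ℝ)) * x^(2*n-1)

lemma hd0 (n : ℕ) (x : ℝ) : HasDerivAt (t0 n) (t1 n x) x := by
  have h := (hasDerivAt_pow (2*n+2) x).const_mul (mycc n / ((2*(n:ℝ)+1)*(2*(n:ℝ)+2)))
  have hfun : t0 n = fun y => mycc n / ((2*(n:ℝ)+1)*(2*(n:ℝ)+2)) * y^(2*n+2) := by
    funext y; unfold t0; ring
  have hval : t1 n x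
      = mycc n / ((2*(n:ℝ)+1)*(2*(n:ℝ)+2)) * ((2*n+2 : ℕ) * x^(2*n+2-1)) := by
    have e : 2*n+2-1 = 2*n+1 := rfl
    rw [e]
    unfold t1
    have h1 : (2*(n:ℝ)+1) ≠ 0 := by positivity
    have h2 : (2*(n:ℝ)+2) ≠ 0 := by positivity
    push_cast
    field_simp
  rw [hfun, hval]; exact h

lemma hd1 (n : ℕ) (x : ℝ) : HasDerivAt (t1 n) (t2 n x) x := by
  have h := (hasDerivAt_pow (2*n+1) x).const_mul (mycc n / (2*(n:ℝ)+1))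
  have hfun : t1 n = fun y => mycc n / (2*(n:ℝ)+1) * y^(2*n+1) := by
    funext y; unfold t1; ring
  have hval : t2 n x = mycc n / (2*(n:ℝ)+1) * ((2*n+1 : ℕ) * x^(2*n+1-1)) := by
    have e : 2*n+1-1 = 2*n := rfl
    rw [e]
    unfold t2
    have h1 : (2*(n:ℝ)+1) ≠ 0 := by positivity
    push_cast
    field_simp
  rw [hfun, hval]; exact h

lemma hd2 (n : ℕ) (x : ℝ) : HasDerivAt (t2 n) (t3 n x) x := by
  have h := (hasDerivAt_pow (2*n) x).const_mul (mycc n)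
  have hfun : t2 n = fun y => mycc n * y^(2*n) := by funext y; unfold t2; ring
  have hval : t3 n x = mycc n * ((2*n : ℕ) * x^(2*n-1)) := by
    unfold t3; push_cast; ring
  rw [hfun, hval]; exact h

noncomputable def S0 (x : ℝ) : ℝ := ∑' n, t0 n x
noncomputable def S1 (x : ℝ) : ℝ := ∑' n, t1 n x
noncomputable def S2 (x : ℝ) : ℝ := ∑' n, t2 n x
noncomputable def S3 (x : ℝ) : ℝ := ∑' n, t3 n x

-- bounds
lemma bt1 {n : ℕ} {x r : ℝ} (hx : |x| ≤ r) (hr : r ≤ 1) : ‖t1 n x‖ ≤ (r^2)^n := by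
  have hr0 : 0 ≤ r := le_trans (abs_nonneg x) hx
  have h1 : (1:ℝ) ≤ 2*(n:ℝ)+1 := by have : (0:ℝ) ≤ (n:ℝ) := Nat.cast_nonneg n; linarith
  have hxx : |x|^(2*n+1) ≤ r^(2*n) := by
    calc |x|^(2*n+1) ≤ r^(2*n+1) := pow_le_pow_left₀ (abs_nonneg x) hx _
    _ ≤ r^(2*n) := pow_le_pow_of_le_one hr0 hr (by omega)
  have : ‖t1 n x‖ = mycc n * |x|^(2*n+1) / (2*(n:ℝ)+1) := by
    rw [t1]; rw [Real.norm_eq_abs, abs_div, abs_mul, abs_pow]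
    rw [abs_of_nonneg (mycc_nonneg n), abs_of_nonneg (by positivity : (0:ℝ) ≤ 2*(n:ℝ)+1)]
  rw [this, ← pow_mul]
  calc mycc n * |x|^(2*n+1) / (2*(n:ℝ)+1) ≤ mycc n * |x|^(2*n+1) :=
        div_le_self (mul_nonneg (mycc_nonneg n) (pow_nonneg (abs_nonneg x) _)) h1
    _ ≤ 1 * r^(2*n) := by
        apply mul_le_mul (mycc_le_one n) hxx (by positivity) one_pos.le
    _ = r^(2*n) := by ring

lemma bt2 {n : ℕ} {x r : ℝ} (hx : |x| ≤ r) : ‖t2 n x‖ ≤ (r^2)^n := by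
  have : ‖t2 n x‖ = mycc n * |x|^(2*n) := by
    rw [t2, Real.norm_eq_abs, abs_mul, abs_pow, abs_of_nonneg (mycc_nonneg n)]
  rw [this, ← pow_mul]
  calc mycc n * |x|^(2*n) ≤ 1 * r^(2*n) :=
    mul_le_mul (mycc_le_one n) (pow_le_pow_left₀ (abs_nonneg x) hx _) (by positivity) one_pos.le
  _ = r^(2*n) := by ring

lemma bt3 {n : ℕ} {x r : ℝ} (hx : |x| ≤ r) (hr0 : 0 < r) :
    ‖t3 n x‖ ≤ (2/r) * ((n:ℝ) * (r^2)^n) := by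
  have : ‖t3 n x‖ = mycc n * (2*(n:ℝ)) * |x|^(2*n-1) := by
    rw [t3, Real.norm_eq_abs, abs_mul, abs_mul, abs_pow, abs_of_nonneg (mycc_nonneg n),
      abs_of_nonneg (by positivity : (0:ℝ) ≤ 2*(n:ℝ))]
  rw [this]
  rcases Nat.eq_zero_or_pos n with h | h
  · subst h; simp
  · have e : (r^2)^n = r^(2*n-1) * r := by
      rw [← pow_mul, ← pow_succ]
      congr 1; omega
    rw [e]
    have hb : |x|^(2*n-1) ≤ r^(2*n-1) := pow_le_pow_left₀ (abs_nonneg x) hx _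
    have : (2/r) * ((n:ℝ) * (r^(2*n-1) * r)) = 2*(n:ℝ) * r^(2*n-1) := by
      field_simp
    rw [this]
    calc mycc n * (2*(n:ℝ)) * |x|^(2*n-1) ≤ 1 * (2*(n:ℝ)) * r^(2*n-1) := by
          apply mul_le_mul (mul_le_mul_of_nonneg_right (mycc_le_one n) (by positivity)) hb
            (by positivity) (by positivity)
      _ = 2*(n:ℝ) * r^(2*n-1) := by ring

lemma sum_geo {r : ℝ} (h0 : 0 ≤ r) (h1 : r < 1) : Summable fun n : ℕ => (r^2)^n :=
  summable_geometric_of_lt_one (by positivity) (by nlinarith)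

lemma sum_ngeo {r : ℝ} (h0 : 0 ≤ r) (h1 : r < 1) :
    Summable fun n : ℕ => (2/r) * ((n:ℝ) * (r^2)^n) := by
  apply Summable.mul_left
  have := summable_pow_mul_geometric_of_norm_lt_one (R := ℝ) 1
    (r := r^2) (by rw [Real.norm_eq_abs, abs_of_nonneg (by positivity)]; nlinarith)
  simpa using this

lemma ball_setup {x : ℝ} (hx : |x| < 1) :
    ∃ r : ℝ, 0 < r ∧ r < 1 ∧ x ∈ Set.Ioo (-r) r ∧ ∀ y ∈ Set.Ioo (-r) r, |y| ≤ r := by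
  refine ⟨(1+|x|)/2, by positivity, by linarith, ?_, ?_⟩
  · constructor <;> cases abs_lt.mp hx <;> cases abs_cases x <;>
      [linarith; linarith; linarith; linarith]
  · intro y hy
    rw [abs_le]
    exact ⟨hy.1.le, hy.2.le⟩


lemma t0_zero (n : ℕ) : t0 n 0 = 0 := by simp [t0]
lemma t1_zero (n : ℕ) : t1 n 0 = 0 := by simp [t1]

lemma summable_t1_at_zero : Summable fun n => t1 n 0 := by
  simp only [t1_zero]; exact summable_zero
lemma summable_t0_at_zero : Summable fun n => t0 n 0 := by
  simp only [t0_zero]; exact summable_zero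
lemma summable_t2_at_zero : Summable fun n => t2 n 0 := by
  apply summable_of_ne_finset_zero (s := {0})
  intro n hn
  simp only [Finset.mem_singleton] at hn
  simp [t2, zero_pow (by omega : 2*n ≠ 0)]

lemma hS1deriv {x : ℝ} (hx : |x| < 1) : HasDerivAt S1 (S2 x) x := by
  obtain ⟨r, hr0, hr1, hxr, hmem⟩ := ball_setup hx
  have h0 : (0:ℝ) ∈ Set.Ioo (-r) r := by constructor <;> simp [hr0] <;> linarith
  exact hasDerivAt_tsum_of_isPreconnected (sum_geo hr0.le hr1) isOpen_Ioo
    (isPreconnected_Ioo) (fun n y _ => hd1 n y)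
    (fun n y hy => bt2 (hmem y hy)) h0 summable_t1_at_zero hxr

lemma hS0deriv {x : ℝ} (hx : |x| < 1) : HasDerivAt S0 (S1 x) x := by
  obtain ⟨r, hr0, hr1, hxr, hmem⟩ := ball_setup hx
  have h0 : (0:ℝ) ∈ Set.Ioo (-r) r := by constructor <;> simp [hr0] <;> linarith
  exact hasDerivAt_tsum_of_isPreconnected (sum_geo hr0.le hr1) isOpen_Ioo
    (isPreconnected_Ioo) (fun n y _ => hd0 n y)
    (fun n y hy => bt1 (hmem y hy) hr1.le) h0 summable_t0_at_zero hxr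

lemma hS2deriv {x : ℝ} (hx : |x| < 1) : HasDerivAt S2 (S3 x) x := by
  obtain ⟨r, hr0, hr1, hxr, hmem⟩ := ball_setup hx
  have h0 : (0:ℝ) ∈ Set.Ioo (-r) r := by constructor <;> simp [hr0] <;> linarith
  exact hasDerivAt_tsum_of_isPreconnected (sum_ngeo hr0.le hr1) isOpen_Ioo
    (isPreconnected_Ioo) (fun n y _ => hd2 n y)
    (fun n y hy => bt3 (hmem y hy) hr0) h0 summable_t2_at_zero hxr

lemma summable_t2 {x : ℝ} (hx : |x| < 1) : Summable fun n => t2 n x := by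
  apply Summable.of_norm_bounded (sum_geo (abs_nonneg x) hx)
  exact fun n => bt2 le_rfl

lemma summable_t3 {x : ℝ} (hx : |x| < 1) : Summable fun n => t3 n x := by
  obtain ⟨r, hr0, hr1, hxr, hmem⟩ := ball_setup hx
  apply Summable.of_norm_bounded (sum_ngeo hr0.le hr1)
  exact fun n => bt3 (hmem x hxr) hr0

lemma mycc_rec' (n : ℕ) : (2*(n:ℝ)+2) * mycc (n+1) = (2*(n:ℝ)+1) * mycc n := mycc_rec n

lemma summable_aux1 {x : ℝ} (hx : |x| < 1) :
    Summable fun n : ℕ => (2*(n:ℝ)+1) * mycc n * x^(2*n+1) := by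
  obtain ⟨r, hr0, hr1, hxr, hmem⟩ := ball_setup hx
  have hxle : |x| ≤ r := hmem x hxr
  apply Summable.of_norm_bounded ((sum_ngeo hr0.le hr1).add (sum_geo hr0.le hr1))
  intro n
  have h1 : ‖(2*(n:ℝ)+1) * mycc n * x^(2*n+1)‖ = (2*(n:ℝ)+1) * mycc n * |x|^(2*n+1) := by
    rw [Real.norm_eq_abs, abs_mul, abs_mul, abs_pow,
      abs_of_nonneg (by positivity : (0:ℝ) ≤ 2*(n:ℝ)+1), abs_of_nonneg (mycc_nonneg n)]
  rw [h1]
  have hb : |x|^(2*n+1) ≤ (r^2)^n := by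
    rw [← pow_mul]
    calc |x|^(2*n+1) ≤ r^(2*n+1) := pow_le_pow_left₀ (abs_nonneg x) hxle _
      _ ≤ r^(2*n) := pow_le_pow_of_le_one hr0.le hr1.le (by omega)
  have hr2 : (0:ℝ) ≤ (r^2)^n := by positivity
  have hle : (2*(n:ℝ)+1) * mycc n * |x|^(2*n+1) ≤ (2*(n:ℝ)+1) * (r^2)^n := by
    calc (2*(n:ℝ)+1) * mycc n * |x|^(2*n+1) ≤ (2*(n:ℝ)+1) * 1 * (r^2)^n := by
          apply mul_le_mul (mul_le_mul_of_nonneg_left (mycc_le_one n) (by positivity)) hb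
            (by positivity) (by positivity)
      _ = (2*(n:ℝ)+1) * (r^2)^n := by ring
  refine hle.trans ?_
  have hrr : 1 ≤ 2/r * 1 → True := fun _ => trivial
  -- (2n+1) * s^n ≤ (2/r) * (n * s^n) + s^n ?  need 2n ≤ (2/r) n i.e. 2 ≤ 2/r true since r ≤ 1
  have h2r : (2:ℝ) ≤ 2/r := by
    rw [le_div_iff₀ hr0]; nlinarith
  have : (2*(n:ℝ)+1) * (r^2)^n = 2 * ((n:ℝ) * (r^2)^n) + (r^2)^n := by ring
  rw [this]
  apply add_le_add_left
  apply mul_le_mul_of_nonneg_right h2r (by positivity)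

lemma summable_aux2 {x : ℝ} (hx : |x| < 1) :
    Summable fun n : ℕ => (2*(n:ℝ)) * mycc n * x^(2*n+1) := by
  have h := (summable_aux1 hx).sub (summable_t2 hx |>.mul_right x)
  apply h.congr
  intro n
  simp only [t2]
  ring

lemma S3_id {x : ℝ} (hx : |x| < 1) : (1 - x^2) * S3 x = x * S2 x := by
  have hs3 : Summable fun n => t3 n x := summable_t3 hx
  have e1 : S3 x = ∑' n : ℕ, (2*(n:ℝ)+1) * mycc n * x^(2*n+1) := by
    rw [S3, Summable.tsum_eq_zero_add hs3]
    have h0 : t3 0 x = 0 := by simp [t3]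
    rw [h0, zero_add]
    apply tsum_congr
    intro n
    have e : 2*(n+1)-1 = 2*n+1 := by omega
    rw [t3, e]
    have := mycc_rec' n
    push_cast
    linear_combination x^(2*n+1) * this
  have e2 : x^2 * S3 x = ∑' n : ℕ, (2*(n:ℝ)) * mycc n * x^(2*n+1) := by
    rw [S3, ← tsum_mul_left]
    apply tsum_congr
    intro n
    rcases Nat.eq_zero_or_pos n with h | h
    · subst h; simp [t3]
    · rw [t3]
      have e : x^2 * x^(2*n-1) = x^(2*n+1) := by
        rw [← pow_add]; congr 1; omega
      calc x^2 * (mycc n * (2*(n:ℝ)) * x^(2*n-1)) = (2*(n:ℝ)) * mycc n * (x^2 * x^(2*n-1)) := by ring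
        _ = (2*(n:ℝ)) * mycc n * x^(2*n+1) := by rw [e]
  have e3 : x * S2 x = ∑' n : ℕ, mycc n * x^(2*n+1) := by
    rw [S2, ← tsum_mul_left]
    apply tsum_congr
    intro n
    rw [t2, pow_succ']
    ring
  have key : (1 - x^2) * S3 x = S3 x - x^2 * S3 x := by ring
  rw [key, e2, e1, e3, ← Summable.tsum_sub (summable_aux1 hx) (summable_aux2 hx)]
  apply tsum_congr
  intro n
  ring

lemma const_helper {f : ℝ → ℝ} (hf : ∀ x ∈ Set.Ioo (-1:ℝ) 1, HasDerivAt f 0 x)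
    {x : ℝ} (hx : |x| < 1) : f x = f 0 := by
  have hx' : x ∈ Set.Ioo (-1:ℝ) 1 := by rw [Set.mem_Ioo]; constructor <;> [linarith [abs_lt.mp hx |>.1]; exact (abs_lt.mp hx).2]
  have h0 : (0:ℝ) ∈ Set.Ioo (-1:ℝ) 1 := by norm_num
  apply (convex_Ioo (-1:ℝ) 1).is_const_of_fderivWithin_eq_zero
    (fun y hy => (hf y hy).differentiableAt.differentiableWithinAt) ?_ hx' h0
  intro y hy
  rw [fderivWithin_of_isOpen isOpen_Ioo hy, (hf y hy).hasFDerivAt.fderiv]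
  ext t
  simp

lemma S2_zero : S2 0 = 1 := by
  rw [S2, tsum_eq_single 0]
  · simp [t2, mycc_zero]
  · intro n hn
    simp [t2, zero_pow (by omega : 2*n ≠ 0)]

lemma one_le_S2 {x : ℝ} (hx : |x| < 1) : 1 ≤ S2 x := by
  have h := Summable.le_tsum (summable_t2 hx) 0 (fun i _ => ?_)
  · rw [S2]
    refine le_trans ?_ h
    simp [t2, mycc_zero]
  · exact mul_nonneg (mycc_nonneg i) ((even_two_mul i).pow_nonneg x)

lemma S2_sq {x : ℝ} (hx : |x| < 1) : (S2 x)^2 * (1 - x^2) = 1 := by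
  have h : ∀ y ∈ Set.Ioo (-1:ℝ) 1, HasDerivAt (fun y => (S2 y)^2 * (1 - y^2)) 0 y := by
    intro y hy
    have hy' : |y| < 1 := by rw [abs_lt]; exact ⟨hy.1, hy.2⟩
    have h1 : HasDerivAt (fun y => (S2 y)^2) (2 * S2 y * S3 y) y := by
      have := (hS2deriv hy').fun_pow 2
      simpa using this
    have h2 : HasDerivAt (fun y : ℝ => 1 - y^2) (-(2*y)) y := by
      have := (hasDerivAt_pow 2 y).const_sub 1
      simpa using this
    have h3 := h1.mul h2
    refine h3.congr_deriv (Eq.symm ?_)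
    have hA := S3_id hy'
    linear_combination (-2 * S2 y) * hA
  have := const_helper h hx
  rw [this, S2_zero]
  norm_num

lemma S2_eq {x : ℝ} (hx : |x| < 1) : S2 x = (Real.sqrt (1 - x^2))⁻¹ := by
  have h1 : (0:ℝ) < 1 - x^2 := by nlinarith [abs_lt.mp hx |>.1, abs_lt.mp hx |>.2, abs_nonneg x]
  have h2 : (0:ℝ) < S2 x := lt_of_lt_of_le one_pos (one_le_S2 hx)
  have hsq : (S2 x)^2 = (1 - x^2)⁻¹ := by
    have := S2_sq hx
    field_simp
    linarith [this]
  have : S2 x = Real.sqrt ((S2 x)^2) := (Real.sqrt_sq h2.le).symm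
  rw [this, hsq, ← Real.sqrt_inv]

lemma S1_zero : S1 0 = 0 := by
  rw [S1]
  simp only [t1_zero]
  exact tsum_zero

lemma S0_zero : S0 0 = 0 := by
  rw [S0]
  simp only [t0_zero]
  exact tsum_zero

lemma S1_eq_arcsin {x : ℝ} (hx : |x| < 1) : S1 x = Real.arcsin x := by
  have h : ∀ y ∈ Set.Ioo (-1:ℝ) 1, HasDerivAt (fun y => S1 y - Real.arcsin y) 0 y := by
    intro y hy
    have hy' : |y| < 1 := by rw [abs_lt]; exact ⟨hy.1, hy.2⟩
    have h1 := hS1deriv hy'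
    have h2 := Real.hasDerivAt_arcsin (ne_of_gt hy.1) (ne_of_lt hy.2)
    have h3 := h1.sub h2
    refine h3.congr_deriv (Eq.symm ?_)
    rw [S2_eq hy', one_div]
    ring
  have := const_helper h hx
  simp only [S1_zero, Real.arcsin_zero, sub_zero] at this
  linarith [this]

lemma key_Ioo {x : ℝ} (hx : |x| < 1) :
    x * Real.arcsin x + Real.sqrt (1 - x^2) = 1 + S0 x := by
  have h : ∀ y ∈ Set.Ioo (-1:ℝ) 1,
      HasDerivAt (fun y => y * Real.arcsin y + Real.sqrt (1 - y^2) - (1 + S0 y)) 0 y := by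
    intro y hy
    have hy' : |y| < 1 := by rw [abs_lt]; exact ⟨hy.1, hy.2⟩
    have hpos : (0:ℝ) < 1 - y^2 := by nlinarith [hy.1, hy.2]
    have hsqrt_pos : (0:ℝ) < Real.sqrt (1 - y^2) := Real.sqrt_pos.mpr hpos
    have h1 : HasDerivAt (fun y : ℝ => y * Real.arcsin y)
        (1 * Real.arcsin y + y * (1 / Real.sqrt (1 - y^2))) y :=
      (hasDerivAt_id y).mul (Real.hasDerivAt_arcsin (ne_of_gt hy.1) (ne_of_lt hy.2))
    have h2 : HasDerivAt (fun y : ℝ => Real.sqrt (1 - y^2))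
        (1 / (2 * Real.sqrt (1 - y^2)) * (-(2*y))) y := by
      have hin : HasDerivAt (fun y : ℝ => 1 - y^2) (-(2*y)) y := by
        have := (hasDerivAt_pow 2 y).const_sub 1
        simpa using this
      exact (Real.hasDerivAt_sqrt (ne_of_gt hpos)).comp y hin
    have h3 : HasDerivAt (fun y : ℝ => 1 + S0 y) (S1 y) y := by
      have := (hS0deriv hy').const_add 1
      simpa using this
    have h4 := (h1.add h2).sub h3
    refine h4.congr_deriv (Eq.symm ?_)
    rw [S1_eq_arcsin hy']
    field_simp
    ring
  have := const_helper h hx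
  have h0 : (0:ℝ) * Real.arcsin 0 + Real.sqrt (1 - 0^2) - (1 + S0 0) = 0 := by
    simp [S0_zero]
  rw [h0] at this
  linarith [this]

lemma summable_inv_sq : Summable fun n : ℕ => ((n:ℝ)+1)⁻¹ * ((n:ℝ)+1)⁻¹ := by
  have h := Real.summable_one_div_nat_pow.mpr (one_lt_two)
  have h2 := (summable_nat_add_iff 1).mpr h
  apply h2.congr
  intro n
  push_cast
  rw [one_div, ← mul_inv, ← pow_two]

lemma bt0_one {n : ℕ} {x : ℝ} (hx : |x| ≤ 1) : ‖t0 n x‖ ≤ ((n:ℝ)+1)⁻¹ * ((n:ℝ)+1)⁻¹ := by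
  have h1 : (0:ℝ) < 2*(n:ℝ)+1 := by positivity
  have h2 : (0:ℝ) < 2*(n:ℝ)+2 := by positivity
  have hnorm : ‖t0 n x‖ = mycc n * |x|^(2*n+2) / ((2*(n:ℝ)+1)*(2*(n:ℝ)+2)) := by
    rw [t0, Real.norm_eq_abs, abs_div, abs_mul, abs_pow, abs_of_nonneg (mycc_nonneg n),
      abs_of_nonneg (by positivity : (0:ℝ) ≤ (2*(n:ℝ)+1)*(2*(n:ℝ)+2))]
  rw [hnorm]
  have hnum : mycc n * |x|^(2*n+2) ≤ 1 :=
    mul_le_mul (mycc_le_one n) (pow_le_one₀ (abs_nonneg x) hx) (by positivity) one_pos.le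
    |>.trans_eq (one_mul 1)
  have hcast : (0:ℝ) ≤ (n:ℝ) := Nat.cast_nonneg n
  have hden : ((n:ℝ)+1) * ((n:ℝ)+1) ≤ (2*(n:ℝ)+1)*(2*(n:ℝ)+2) := by nlinarith
  have hdpos : (0:ℝ) < ((n:ℝ)+1) * ((n:ℝ)+1) := by positivity
  calc mycc n * |x|^(2*n+2) / ((2*(n:ℝ)+1)*(2*(n:ℝ)+2))
      ≤ 1 / (((n:ℝ)+1) * ((n:ℝ)+1)) :=
        div_le_div₀ zero_le_one hnum hdpos hden
    _ = ((n:ℝ)+1)⁻¹ * ((n:ℝ)+1)⁻¹ := by rw [one_div, mul_inv]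

lemma t0_continuous (n : ℕ) : Continuous (t0 n) := by
  unfold t0
  fun_prop

lemma contS0 : ContinuousOn S0 (Set.Icc (-1:ℝ) 1) := by
  apply continuousOn_tsum (fun n => (t0_continuous n).continuousOn) summable_inv_sq
  intro n x hx
  exact bt0_one (abs_le.mpr ⟨hx.1, hx.2⟩)

lemma key_Icc {z : ℝ} (hz : |z| ≤ 1) :
    z * Real.arcsin z + Real.sqrt (1 - z^2) = 1 + S0 z := by
  have hzIcc : z ∈ Set.Icc (-1:ℝ) 1 := by
    rw [Set.mem_Icc]; exact abs_le.mp hz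
  have hne : (𝓝[Set.Ioo (-1:ℝ) 1] z).NeBot := by
    apply mem_closure_iff_nhdsWithin_neBot.mp
    rw [closure_Ioo (by norm_num : (-1:ℝ) ≠ 1)]
    exact hzIcc
  set F : ℝ → ℝ := fun x => x * Real.arcsin x + Real.sqrt (1 - x^2) with hF
  set G : ℝ → ℝ := fun x => 1 + S0 x with hG
  have hFc : Continuous F := by
    apply Continuous.add
    · exact continuous_id.mul Real.continuous_arcsin
    · exact Real.continuous_sqrt.comp (continuous_const.sub (continuous_pow 2))
  have htF : Filter.Tendsto F (𝓝[Set.Ioo (-1:ℝ) 1] z) (𝓝 (F z)) :=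
    (hFc.continuousAt.continuousWithinAt)
  have htG : Filter.Tendsto G (𝓝[Set.Ioo (-1:ℝ) 1] z) (𝓝 (G z)) := by
    have h1 : ContinuousWithinAt G (Set.Icc (-1:ℝ) 1) z :=
      (continuousWithinAt_const.add (contS0 z hzIcc))
    exact h1.mono Set.Ioo_subset_Icc_self
  have htF' : Filter.Tendsto F (𝓝[Set.Ioo (-1:ℝ) 1] z) (𝓝 (G z)) := by
    apply htG.congr'
    filter_upwards [self_mem_nhdsWithin] with y hy
    have hy' : |y| < 1 := abs_lt.mpr ⟨hy.1, hy.2⟩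
    exact (key_Ioo hy').symm
  exact tendsto_nhds_unique htF htF'


lemma t0_rewrite (n : ℕ) (z : ℝ) :
    (Nat.choose (2 * n) n : ℝ) * z ^ (2 * n + 2)
      / (2 ^ (2 * n) * (2 * (n : ℝ) + 1) * (2 * (n : ℝ) + 2)) = t0 n z := by
  rw [t0, mycc]
  have h1 : (2*(n:ℝ)+1) ≠ 0 := by positivity
  have h2 : (2*(n:ℝ)+2) ≠ 0 := by positivity
  have h3 : (2:ℝ)^(2*n) ≠ 0 := by positivity
  field_simp

/-- For every real `z` with `|z| ≤ 1`, the series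
`Σ_{n=0}^∞ binom(2n,n) z^{2n+2} / (2^{2n} (2n+1)(2n+2))` converges absolutely and
`z · arcsin z + √(1 − z²) = 1 + Σ_{n=0}^∞ binom(2n,n) z^{2n+2} / (2^{2n} (2n+1)(2n+2))`. -/
theorem statement3 (z : ℝ) (hz : |z| ≤ 1) :
    (Summable fun n : ℕ =>
      |(Nat.choose (2 * n) n : ℝ) * z ^ (2 * n + 2)
        / (2 ^ (2 * n) * (2 * (n : ℝ) + 1) * (2 * (n : ℝ) + 2))|) ∧
    z * Real.arcsin z + Real.sqrt (1 - z ^ 2)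
      = 1 + ∑' n : ℕ, (Nat.choose (2 * n) n : ℝ) * z ^ (2 * n + 2)
          / (2 ^ (2 * n) * (2 * (n : ℝ) + 1) * (2 * (n : ℝ) + 2)) := by
  constructor
  · apply Summable.of_nonneg_of_le (fun n => abs_nonneg _) (fun n => ?_) summable_inv_sq
    rw [t0_rewrite n z]
    exact bt0_one hz
  · have h1 : ∑' n : ℕ, (Nat.choose (2 * n) n : ℝ) * z ^ (2 * n + 2)
          / (2 ^ (2 * n) * (2 * (n : ℝ) + 1) * (2 * (n : ℝ) + 2)) = S0 z := by
      rw [S0]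
      exact tsum_congr fun n => t0_rewrite n z
    rw [h1]
    exact key_Icc hz
end

section
/- Let w_1, …, w_p be nonzero vectors in ℝ^d. The p×p matrix R with entries R_{ij} = (1/(2π)) Σ_{n=1}^{∞} binom(2n, n) (w_i·w_j)^{2n+2} / ( 2^{2n} (2n+1)(2n+2) (‖w_i‖‖w_j‖)^{2n+1} ) is positive semidefinite. -/
open MeasureTheory ProbabilityTheory Real

noncomputable def stdGaussian (d : ℕ) : Measure (Fin d → ℝ) :=
  Measure.pi fun _ => gaussianReal 0 1

def dotp {d : ℕ} (x y : Fin d → ℝ) : ℝ := ∑ i, x i * y i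

noncomputable def vecNorm {d : ℕ} (x : Fin d → ℝ) : ℝ := Real.sqrt (∑ i, x i ^ 2)

lemma dotp_pow_expand {d : ℕ} (k : ℕ) (x y : Fin d → ℝ) :
    dotp x y ^ k = ∑ f : Fin k → Fin d, (∏ l, x (f l)) * (∏ l, y (f l)) := by
  have h1 : dotp x y ^ k = ∏ _l : Fin k, ∑ a, x a * y a := by
    simp [Finset.prod_const, dotp]
  rw [h1, Finset.prod_univ_sum]
  simp [Fintype.piFinset_univ, Finset.prod_mul_distrib]

lemma quad_nonneg {p d : ℕ} (k : ℕ) (c : Fin p → ℝ) (u : Fin p → Fin d → ℝ) :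
    0 ≤ ∑ i, ∑ j, c i * c j * dotp (u i) (u j) ^ k := by
  have h : ∑ i, ∑ j, c i * c j * dotp (u i) (u j) ^ k
      = ∑ f : Fin k → Fin d, (∑ i, c i * ∏ l, u i (f l)) ^ 2 := by
    calc ∑ i, ∑ j, c i * c j * dotp (u i) (u j) ^ k
        = ∑ i, ∑ j, ∑ f : Fin k → Fin d,
            (c i * ∏ l, u i (f l)) * (c j * ∏ l, u j (f l)) := by
          refine Finset.sum_congr rfl fun i _ => Finset.sum_congr rfl fun j _ => ?_
          rw [dotp_pow_expand, Finset.mul_sum]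
          exact Finset.sum_congr rfl fun f _ => by ring
      _ = ∑ i, ∑ f : Fin k → Fin d, ∑ j,
            (c i * ∏ l, u i (f l)) * (c j * ∏ l, u j (f l)) :=
          Finset.sum_congr rfl fun i _ => Finset.sum_comm
      _ = ∑ f : Fin k → Fin d, ∑ i, ∑ j,
            (c i * ∏ l, u i (f l)) * (c j * ∏ l, u j (f l)) := Finset.sum_comm
      _ = ∑ f : Fin k → Fin d, (∑ i, c i * ∏ l, u i (f l)) ^ 2 := by
          refine Finset.sum_congr rfl fun f _ => ?_
          rw [sq, Finset.sum_mul_sum]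
  rw [h]
  exact Finset.sum_nonneg fun f _ => sq_nonneg _

lemma vecNorm_pos {d : ℕ} {x : Fin d → ℝ} (hx : x ≠ 0) : 0 < vecNorm x := by
  obtain ⟨a, ha⟩ := Function.ne_iff.mp hx
  refine Real.sqrt_pos.mpr ?_
  have : (0:ℝ) < x a ^ 2 := sq_pos_iff.mpr ha
  refine lt_of_lt_of_le this ?_
  exact Finset.single_le_sum (fun i _ => sq_nonneg (x i)) (Finset.mem_univ a)

lemma sq_vecNorm {d : ℕ} (x : Fin d → ℝ) : vecNorm x ^ 2 = ∑ i, x i ^ 2 := by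
  rw [vecNorm, Real.sq_sqrt]
  exact Finset.sum_nonneg fun i _ => sq_nonneg _

lemma dotp_sq_le {d : ℕ} (x y : Fin d → ℝ) :
    dotp x y ^ 2 ≤ (vecNorm x * vecNorm y) ^ 2 := by
  rw [mul_pow, sq_vecNorm, sq_vecNorm]
  exact Finset.sum_mul_sq_le_sq_mul_sq _ _ _

lemma central_le {m : ℕ} : (Nat.choose (2*m) m : ℝ) ≤ 2 ^ (2*m) := by
  have h : Nat.choose (2*m) m ≤ 2 ^ (2*m) := by
    calc Nat.choose (2*m) m ≤ ∑ i ∈ Finset.range (2*m+1), Nat.choose (2*m) i :=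
          Finset.single_le_sum (fun i _ => Nat.zero_le _) (by simp [Finset.mem_range]; omega)
      _ = 2 ^ (2*m) := Nat.sum_range_choose (2*m)
  exact_mod_cast h

/-- For nonzero vectors `w_1, …, w_p` in `ℝ^d`, the `p×p` matrix with entries
`R_{ij} = (1/(2π)) Σ_{n≥1} binom(2n,n) (w_i·w_j)^{2n+2} / (2^{2n}(2n+1)(2n+2)(‖w_i‖‖w_j‖)^{2n+1})`
is positive semidefinite: `v R vᵀ ≥ 0` for every `v ∈ ℝ^p`. -/
theorem statement6 {d p : ℕ} (w : Fin p → Fin d → ℝ) (hw : ∀ i, w i ≠ 0) :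
    ∀ v : Fin p → ℝ,
      0 ≤ ∑ i : Fin p, ∑ j : Fin p,
        v i * ((1 / (2 * π)) * ∑' n : ℕ,
          (Nat.choose (2 * (n + 1)) (n + 1) : ℝ) * (dotp (w i) (w j)) ^ (2 * (n + 1) + 2)
            / (2 ^ (2 * (n + 1)) * (2 * ((n : ℝ) + 1) + 1) * (2 * ((n : ℝ) + 1) + 2)
               * (vecNorm (w i) * vecNorm (w j)) ^ (2 * (n + 1) + 1))) * v j := by
  intro v
  set N : Fin p → ℝ := fun i => vecNorm (w i) with hN
  have hNpos : ∀ i, 0 < N i := fun i => vecNorm_pos (hw i)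
  set a : ℕ → Fin p → Fin p → ℝ := fun n i j =>
    (Nat.choose (2 * (n + 1)) (n + 1) : ℝ) * (dotp (w i) (w j)) ^ (2 * (n + 1) + 2)
      / (2 ^ (2 * (n + 1)) * (2 * ((n : ℝ) + 1) + 1) * (2 * ((n : ℝ) + 1) + 2)
         * (N i * N j) ^ (2 * (n + 1) + 1)) with ha
  -- nonnegativity of a
  have ha_nonneg : ∀ n i j, 0 ≤ a n i j := by
    intro n i j
    have h1 : 0 ≤ (dotp (w i) (w j)) ^ (2 * (n + 1) + 2) := by
      have : 2 * (n+1) + 2 = 2 * (n + 2) := by ring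
      rw [this, pow_mul]
      positivity
    have h2 : (0:ℝ) < N i * N j := mul_pos (hNpos i) (hNpos j)
    positivity
  -- bound on a
  have ha_le : ∀ n i j, a n i j ≤ (N i * N j) / ((n:ℝ)+1)^2 := by
    intro n i j
    have hNN : (0:ℝ) < N i * N j := mul_pos (hNpos i) (hNpos j)
    have hdenpos : (0:ℝ) < 2 ^ (2 * (n + 1)) * (2 * ((n : ℝ) + 1) + 1) * (2 * ((n : ℝ) + 1) + 2)
         * (N i * N j) ^ (2 * (n + 1) + 1) := by positivity
    have hts : dotp (w i) (w j) ^ (2 * (n + 1) + 2) ≤ (N i * N j) ^ (2 * (n + 1) + 2) := by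
      have h2 : 2 * (n+1) + 2 = 2 * (n + 2) := by ring
      rw [h2, pow_mul, pow_mul]
      exact pow_le_pow_left₀ (sq_nonneg _) (dotp_sq_le (w i) (w j)) _
    have hC : (Nat.choose (2 * (n + 1)) (n + 1) : ℝ) ≤ 2 ^ (2 * (n+1)) := central_le
    calc a n i j ≤ (2 ^ (2 * (n+1)) * (N i * N j) ^ (2 * (n + 1) + 2))
          / (2 ^ (2 * (n + 1)) * (2 * ((n : ℝ) + 1) + 1) * (2 * ((n : ℝ) + 1) + 2)
             * (N i * N j) ^ (2 * (n + 1) + 1)) := by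
          refine div_le_div₀ (by positivity) ?_ hdenpos le_rfl
          have htnn : (0:ℝ) ≤ dotp (w i) (w j) ^ (2 * (n + 1) + 2) := by
            have h2 : 2 * (n+1) + 2 = 2 * (n + 2) := by ring
            rw [h2, pow_mul]; positivity
          exact mul_le_mul hC (le_refl _) htnn (by positivity) |>.trans
            (mul_le_mul_of_nonneg_left hts (by positivity))
      _ = (N i * N j) / ((2 * ((n : ℝ) + 1) + 1) * (2 * ((n : ℝ) + 1) + 2)) := by
          rw [pow_succ (N i * N j) (2 * (n + 1) + 1)]
          field_simp
      _ ≤ (N i * N j) / ((n:ℝ)+1)^2 := by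
          apply div_le_div_of_nonneg_left hNN.le (by positivity)
          nlinarith [Nat.cast_nonneg (α := ℝ) n]
  have hSum : ∀ i j, Summable fun n => a n i j := by
    intro i j
    refine Summable.of_nonneg_of_le (fun n => ha_nonneg n i j) (fun n => ha_le n i j) ?_
    have h1 : Summable (fun n : ℕ => 1 / ((n:ℝ)) ^ 2) :=
      Real.summable_one_div_nat_pow.mpr one_lt_two
    have h2 : Summable (fun n : ℕ => 1 / ((n:ℝ)+1) ^ 2) := by
      have := (summable_nat_add_iff 1).mpr h1
      refine this.congr fun n => ?_
      push_cast
      ring_nf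
    refine (h2.mul_left (N i * N j)).congr fun n => ?_
    rw [mul_one_div]
  -- per-n nonnegativity
  set c : ℝ := 1 / (2 * π) with hc
  have hcpos : 0 ≤ c := by rw [hc]; positivity
  have hTn : ∀ n, 0 ≤ ∑ i, ∑ j, v i * (c * a n i j) * v j := by
    intro n
    set u : Fin p → Fin d → ℝ := fun i x => w i x / N i with hu
    set b : Fin p → ℝ := fun i => v i * N i with hb
    set K : ℝ := c * ((Nat.choose (2 * (n + 1)) (n + 1) : ℝ)
      / (2 ^ (2 * (n + 1)) * (2 * ((n : ℝ) + 1) + 1) * (2 * ((n : ℝ) + 1) + 2))) with hK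
    have hKnn : 0 ≤ K := by
      rw [hK, hc]; positivity
    have hdot : ∀ i j, dotp (w i) (w j) = (N i * N j) * dotp (u i) (u j) := by
      intro i j
      rw [dotp, dotp, Finset.mul_sum]
      refine Finset.sum_congr rfl fun x _ => ?_
      have hNi := (hNpos i).ne'
      have hNj := (hNpos j).ne'
      rw [hu]
      field_simp
    have heq : ∀ i j, v i * (c * a n i j) * v j
        = K * (b i * b j * dotp (u i) (u j) ^ (2 * (n + 1) + 2)) := by
      intro i j
      simp only [ha, hK, hb]
      rw [hdot i j]
      have hNi := (hNpos i).ne'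
      have hNj := (hNpos j).ne'
      have h2 : ((2:ℝ) * ((n : ℝ) + 1) + 1) ≠ 0 := by positivity
      have h3 : ((2:ℝ) * ((n : ℝ) + 1) + 2) ≠ 0 := by positivity
      rw [mul_pow (N i * N j), pow_succ (N i * N j) (2 * (n + 1) + 1)]
      field_simp
    calc (0:ℝ) ≤ K * ∑ i, ∑ j, b i * b j * dotp (u i) (u j) ^ (2 * (n + 1) + 2) :=
          mul_nonneg hKnn (quad_nonneg _ b u)
      _ = ∑ i, ∑ j, v i * (c * a n i j) * v j := by
          rw [Finset.mul_sum]
          refine Finset.sum_congr rfl fun i _ => ?_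
          rw [Finset.mul_sum]
          exact Finset.sum_congr rfl fun j _ => (heq i j).symm
  -- swap sums with tsum
  have hterm : ∀ i j, v i * (c * ∑' n, a n i j) * v j
      = ∑' n, v i * (c * a n i j) * v j := by
    intro i j
    have h : (fun n => v i * (c * a n i j) * v j)
        = fun n => (v i * c * v j) * a n i j := by funext n; ring
    rw [h, tsum_mul_left]
    ring
  have h1 : ∀ i j, Summable fun n => v i * (c * a n i j) * v j := by
    intro i j
    have h : (fun n => v i * (c * a n i j) * v j)
        = fun n => (v i * c * v j) * a n i j := by funext n; ring
    rw [h]; exact (hSum i j).mul_left _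
  have hswap : ∑ i : Fin p, ∑ j : Fin p, v i * (c * ∑' n, a n i j) * v j
      = ∑' n, ∑ i, ∑ j, v i * (c * a n i j) * v j := by
    calc ∑ i : Fin p, ∑ j : Fin p, v i * (c * ∑' n, a n i j) * v j
        = ∑ i : Fin p, ∑ j : Fin p, ∑' n, v i * (c * a n i j) * v j :=
          Finset.sum_congr rfl fun i _ => Finset.sum_congr rfl fun j _ => hterm i j
      _ = ∑ i : Fin p, ∑' n, ∑ j, v i * (c * a n i j) * v j :=
          Finset.sum_congr rfl fun i _ => (Summable.tsum_finsetSum fun j _ => h1 i j).symm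
      _ = ∑' n, ∑ i, ∑ j, v i * (c * a n i j) * v j :=
          (Summable.tsum_finsetSum fun i _ => summable_sum fun j _ => h1 i j).symm
  rw [show (∑ i : Fin p, ∑ j : Fin p,
        v i * ((1 / (2 * π)) * ∑' n : ℕ,
          (Nat.choose (2 * (n + 1)) (n + 1) : ℝ) * (dotp (w i) (w j)) ^ (2 * (n + 1) + 2)
            / (2 ^ (2 * (n + 1)) * (2 * ((n : ℝ) + 1) + 1) * (2 * ((n : ℝ) + 1) + 2)
               * (vecNorm (w i) * vecNorm (w j)) ^ (2 * (n + 1) + 1))) * v j)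
      = ∑ i : Fin p, ∑ j : Fin p, v i * (c * ∑' n, a n i j) * v j from rfl]
  rw [hswap]
  exact tsum_nonneg hTn
end

section
/- Let Z = (Z₁, …, Z_d) be a d-dimensional standard normal random vector, let h be a natural number with h < d, let m₁, …, m_h be natural numbers (m₁ ≥ 1), and set d′ = d − h. Then for every κ ∈ (0,1), E[ d · (∏_{k=1}^{h} Z_k^{2m_k}) / ‖Z‖² ] ≤ (1/κ)(1 + h/d′) M₁ + 2(d′ + h) exp(−(1−κ)² d′/8) M₂, where M₁ = ∏_{k=1}^{h} E[Z_k^{2m_k}] and M₂ = E[Z₁^{2(m₁−1)}] ∏_{k=2}^{h} E[Z_k^{2m_k}]. -/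
open MeasureTheory ProbabilityTheory Real

open scoped ENNReal NNReal


lemma my_log_lb {u : ℝ} (hu : 0 ≤ u) : u - u^2/2 ≤ Real.log (1+u) := by
  have h1 : (0:ℝ) ∉ Set.uIcc (1:ℝ) (1+u) := by
    rw [Set.mem_uIcc]; push_neg; constructor <;> intro hx <;> nlinarith
  have h2 : Real.log (1+u) = ∫ x in (1:ℝ)..(1+u), x⁻¹ := by
    rw [integral_inv h1]; simp
  have h3 : (∫ x in (1:ℝ)..(1+u), (2 - x)) ≤ ∫ x in (1:ℝ)..(1+u), x⁻¹ := by
    apply intervalIntegral.integral_mono_on (by linarith)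
    · exact (intervalIntegrable_const).sub intervalIntegral.intervalIntegrable_id
    · apply intervalIntegral.intervalIntegrable_inv
      · intro x hx; rw [Set.uIcc_of_le (by linarith)] at hx; nlinarith [hx.1]
      · exact Continuous.continuousOn continuous_id
    · intro x hx
      have hx1 : 1 ≤ x := hx.1
      have hxpos : (0:ℝ) < x := by linarith
      have hkey : (2 - x) * x ≤ 1 := by nlinarith [sq_nonneg (x-1)]
      calc 2 - x = (2-x)*x/x := by field_simp
        _ ≤ 1/x := by gcongr
        _ = x⁻¹ := one_div x
  have h4 : (∫ x in (1:ℝ)..(1+u), (2 - x)) = u - u^2/2 := by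
    rw [intervalIntegral.integral_sub intervalIntegrable_const
      intervalIntegral.intervalIntegrable_id]
    simp [integral_id]
    ring
  linarith [h3, h4.symm ▸ h3]


lemma my_factor_bound {u : ℝ} (h0 : 0 < u) (h1 : u < 1) :
    Real.exp (u/2 * (1-u)) * (Real.sqrt (1+u))⁻¹ ≤ Real.exp (-u^2/8) := by
  have hpos : (0:ℝ) < 1 + u := by linarith
  have hs : Real.sqrt (1+u) = Real.exp (Real.log (1+u) / 2) := by
    rw [← Real.log_sqrt hpos.le, Real.exp_log (Real.sqrt_pos.mpr hpos)]
  have hlog := my_log_lb h0.le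
  rw [hs, ← Real.exp_neg, ← Real.exp_add, Real.exp_le_exp]
  nlinarith [sq_nonneg u]

lemma my_gauss_density :
    gaussianReal 0 1 = MeasureTheory.volume.withDensity
      (fun x => ((gaussianPDFReal 0 1 x).toNNReal : ℝ≥0∞)) := by
  rw [gaussianReal_of_var_ne_zero 0 one_ne_zero]
  rfl

lemma my_integral_gauss (g : ℝ → ℝ) :
    ∫ x, g x ∂(gaussianReal 0 1) = ∫ x, gaussianPDFReal 0 1 x * g x := by
  rw [my_gauss_density, integral_withDensity_eq_integral_smul
    (measurable_gaussianPDFReal 0 1).real_toNNReal g]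
  congr 1; ext x
  simp [NNReal.smul_def, Real.coe_toNNReal', max_eq_left (gaussianPDFReal_nonneg 0 1 x)]

lemma my_integrable_gauss_iff (g : ℝ → ℝ) :
    Integrable g (gaussianReal 0 1) ↔
      Integrable (fun x => gaussianPDFReal 0 1 x * g x) MeasureTheory.volume := by
  rw [my_gauss_density, integrable_withDensity_iff_integrable_smul
    (measurable_gaussianPDFReal 0 1).real_toNNReal]
  have h : ∀ x, ((gaussianPDFReal 0 1 x).toNNReal : ℝ) • g x = gaussianPDFReal 0 1 x * g x := by
    intro x
    simp [NNReal.smul_def, Real.coe_toNNReal', max_eq_left (gaussianPDFReal_nonneg 0 1 x)]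
  constructor <;> intro hi
  · exact hi.congr (by filter_upwards with x using h x)
  · exact hi.congr (by filter_upwards with x using (h x).symm)

lemma my_pdf_eq (x : ℝ) :
    gaussianPDFReal 0 1 x = (Real.sqrt (2 * Real.pi))⁻¹ * Real.exp (-(2⁻¹) * x^2) := by
  rw [gaussianPDFReal]
  norm_num
  ring_nf
  exact Or.inl trivial

lemma my_integrable_exp_lin_quad (c : ℝ) {b : ℝ} (hb : 0 < b) :
    Integrable (fun x : ℝ => Real.exp (c*x - b*x^2)) MeasureTheory.volume := by
  have h : ∀ x : ℝ, c*x - b*x^2 = c^2/(4*b) + (-b*(x - c/(2*b))^2) := by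
    intro x; field_simp; ring
  simp_rw [h, Real.exp_add]
  exact ((integrable_exp_neg_mul_sq hb).comp_sub_right (c/(2*b))).const_mul _

lemma my_integrable_pow_mul_exp (k : ℕ) {b : ℝ} (hb : 0 < b) :
    Integrable (fun x : ℝ => x^(2*k) * Real.exp (-b*x^2)) MeasureTheory.volume := by
  have hmeas : AEStronglyMeasurable (fun x : ℝ => x^(2*k) * Real.exp (-b*x^2))
      MeasureTheory.volume := by
    apply Continuous.aestronglyMeasurable; continuity
  have hint : Integrable (fun x : ℝ => ((2*k).factorial : ℝ) *
      (Real.exp (x - b*x^2) + Real.exp (-x - b*x^2))) MeasureTheory.volume := by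
    apply Integrable.const_mul
    have h2 := my_integrable_exp_lin_quad (-1) hb
    simp_rw [neg_one_mul] at h2
    have h1 := my_integrable_exp_lin_quad 1 hb
    simp_rw [one_mul] at h1
    exact h1.add h2
  apply Integrable.mono' hint hmeas
  filter_upwards with x
  have hexp : (0:ℝ) < Real.exp (-b*x^2) := Real.exp_pos _
  have h1 : |x| ^ (2*k) ≤ ((2*k).factorial : ℝ) * Real.exp |x| := by
    have := Real.pow_div_factorial_le_exp _ (abs_nonneg x) (2*k)
    rw [div_le_iff₀ (by positivity)] at this
    linarith [this]
  have h2 : Real.exp |x| * Real.exp (-b*x^2)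
      ≤ Real.exp (x - b*x^2) + Real.exp (-x - b*x^2) := by
    rw [← Real.exp_add]
    rcases abs_cases x with ⟨he, _⟩ | ⟨he, _⟩ <;> rw [he]
    · rw [show x + -b*x^2 = x - b*x^2 by ring]
      nlinarith [Real.exp_pos (-x - b*x^2)]
    · rw [show -x + -b*x^2 = -x - b*x^2 by ring]
      nlinarith [Real.exp_pos (x - b*x^2)]
  rw [Real.norm_eq_abs, abs_mul, abs_of_pos hexp, abs_pow]
  calc |x|^(2*k) * Real.exp (-b*x^2)
      ≤ (((2*k).factorial : ℝ) * Real.exp |x|) * Real.exp (-b*x^2) :=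
        mul_le_mul_of_nonneg_right h1 hexp.le
    _ ≤ ((2*k).factorial : ℝ) * (Real.exp (x - b*x^2) + Real.exp (-x - b*x^2)) := by
        rw [mul_assoc]
        exact mul_le_mul_of_nonneg_left h2 (by positivity)

lemma my_integrable_pow_gauss (k : ℕ) :
    Integrable (fun x : ℝ => x ^ (2*k)) (gaussianReal 0 1) := by
  rw [my_integrable_gauss_iff]
  have h : ∀ x : ℝ, gaussianPDFReal 0 1 x * x ^ (2*k)
      = (Real.sqrt (2 * Real.pi))⁻¹ * (x^(2*k) * Real.exp (-(2⁻¹)*x^2)) := by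
    intro x; rw [my_pdf_eq]; ring
  simp_rw [h]
  exact (my_integrable_pow_mul_exp k (by norm_num)).const_mul _

lemma my_integrable_exp_gauss {l : ℝ} (hl : 0 ≤ l) :
    Integrable (fun x : ℝ => Real.exp (-l*x^2)) (gaussianReal 0 1) := by
  apply Integrable.mono' (integrable_const (1:ℝ))
  · apply Continuous.aestronglyMeasurable; continuity
  · filter_upwards with x
    rw [Real.norm_eq_abs, abs_of_nonneg (Real.exp_pos _).le, Real.exp_le_one_iff]
    nlinarith [sq_nonneg x]

lemma my_exp_moment {l : ℝ} (hl : 0 < l) :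
    ∫ x, Real.exp (-l*x^2) ∂(gaussianReal 0 1) = (Real.sqrt (1+2*l))⁻¹ := by
  rw [my_integral_gauss]
  have h : ∀ x : ℝ, gaussianPDFReal 0 1 x * Real.exp (-l*x^2)
      = (Real.sqrt (2 * Real.pi))⁻¹ * Real.exp (-(l+2⁻¹)*x^2) := by
    intro x; rw [my_pdf_eq, mul_assoc, ← Real.exp_add]; ring_nf
  simp only [h]
  rw [MeasureTheory.integral_const_mul, integral_gaussian,
    show (1+2*l) = 2*(l+2⁻¹) by ring,
    Real.sqrt_mul (by norm_num : (0:ℝ) ≤ 2),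
    Real.sqrt_div Real.pi_nonneg]
  have s2 : (0:ℝ) < Real.sqrt 2 := Real.sqrt_pos.mpr (by norm_num)
  have spi : (0:ℝ) < Real.sqrt Real.pi := Real.sqrt_pos.mpr Real.pi_pos
  have sl : (0:ℝ) < Real.sqrt (l+2⁻¹) := Real.sqrt_pos.mpr (by linarith)
  field_simp
  rw [← Real.sqrt_mul (by norm_num : (0:ℝ) ≤ 2)]
  congr 1
  ring


lemma my_pi_integral {n : ℕ} (μ : Measure ℝ) [IsProbabilityMeasure μ] (f : Fin n → ℝ → ℝ) :
    ∫ x : Fin n → ℝ, ∏ i, f i (x i) ∂(Measure.pi fun _ => μ) = ∏ i, ∫ x, f i x ∂μ := by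
  induction n with
  | zero =>
      have : IsProbabilityMeasure (Measure.pi fun _ : Fin 0 => μ) := by infer_instance
      simp
  | succ n ih =>
      calc
        (∫ x : Fin (n+1) → ℝ, ∏ i, f i (x i) ∂(Measure.pi fun _ => μ))
            = ∫ x : ℝ × (Fin n → ℝ), f 0 x.1 * ∏ i : Fin n, f (Fin.succ i) (x.2 i)
              ∂(μ.prod (Measure.pi fun _ => μ)) := by
          rw [← ((measurePreserving_piFinSuccAbove (fun _ : Fin (n+1) => μ) 0).symm).integral_comp']
          congr 1
          funext x
          rw [Fin.prod_univ_succ]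
          simp [MeasurableEquiv.piFinSuccAbove_symm_apply, Fin.zero_succAbove]
        _ = (∫ x, f 0 x ∂μ) * ∏ i : Fin n, ∫ x, f (Fin.succ i) x ∂μ := by
          rw [← ih (fun i => f (Fin.succ i)), ← integral_prod_mul]
        _ = ∏ i, ∫ x, f i x ∂μ := by rw [Fin.prod_univ_succ]

lemma my_pi_integrable {n : ℕ} (μ : Measure ℝ) [IsProbabilityMeasure μ] (f : Fin n → ℝ → ℝ)
    (hf : ∀ i, Integrable (f i) μ) :
    Integrable (fun x : Fin n → ℝ => ∏ i, f i (x i)) (Measure.pi fun _ => μ) := by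
  induction n with
  | zero =>
      have : IsProbabilityMeasure (Measure.pi fun _ : Fin 0 => μ) := by infer_instance
      simp only [Finset.univ_eq_empty, Finset.prod_empty]
      exact integrable_const 1
  | succ n ih =>
      have h := ((measurePreserving_piFinSuccAbove (fun _ : Fin (n+1) => μ) 0).symm)
      rw [← h.integrable_comp_emb (MeasurableEquiv.measurableEmbedding _)]
      have hbase : Integrable (fun x : ℝ × (Fin n → ℝ) =>
          f 0 x.1 * ∏ i : Fin n, f (Fin.succ i) (x.2 i)) (μ.prod (Measure.pi fun _ => μ)) :=
        Integrable.mul_prod (hf 0) (ih (fun i => f (Fin.succ i)) (fun i => hf _))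
      apply hbase.congr
      filter_upwards with x
      rw [Function.comp_apply, Fin.prod_univ_succ]
      simp [MeasurableEquiv.piFinSuccAbove_symm_apply, Fin.zero_succAbove]

lemma my_moment_coord {d : ℕ} (j : Fin d) (n : ℕ) :
    ∫ z, z j ^ n ∂(stdGaussian d) = ∫ x, x ^ n ∂(gaussianReal 0 1) := by
  have h1 : (fun z : Fin d → ℝ => z j ^ n)
      = fun z => ∏ i, (fun i : Fin d => fun x : ℝ => if i = j then x ^ n else 1) i (z i) := by
    funext z
    rw [Finset.prod_ite_eq' Finset.univ j (fun i => z i ^ n)]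
    simp
  have h2 : ∀ i : Fin d, (∫ x, (if i = j then x ^ n else 1) ∂(gaussianReal 0 1))
      = if i = j then (∫ x, x ^ n ∂(gaussianReal 0 1)) else 1 := by
    intro i; split <;> simp
  calc ∫ z, z j ^ n ∂(stdGaussian d)
      = ∫ z : Fin d → ℝ, ∏ i, (fun i : Fin d => fun x : ℝ => if i = j then x ^ n else 1) i (z i)
        ∂(Measure.pi fun _ => gaussianReal 0 1) := by rw [_root_.stdGaussian] at *; rw [h1]
    _ = ∏ i, ∫ x, (fun i : Fin d => fun x : ℝ => if i = j then x ^ n else 1) i x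
        ∂(gaussianReal 0 1) :=
        my_pi_integral (gaussianReal 0 1) (fun i x => if i = j then x ^ n else 1)
    _ = ∫ x, x ^ n ∂(gaussianReal 0 1) := by
        simp_rw [h2]
        rw [Finset.prod_ite_eq' Finset.univ j (fun _ => ∫ x, x ^ n ∂(gaussianReal 0 1))]
        simp

lemma my_prod_low {d h : ℕ} (hhd : h ≤ d) (F : Fin d → ℝ) :
    ∏ i ∈ Finset.univ.filter (fun i : Fin d => i.val < h), F i
      = ∏ k : Fin h, F (Fin.castLE hhd k) := by
  have hset : Finset.univ.filter (fun i : Fin d => i.val < h)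
      = Finset.map (Fin.castLEEmb hhd) Finset.univ := by
    ext i
    simp only [Finset.mem_filter, Finset.mem_univ, true_and, Finset.mem_map,
      Fin.castLEEmb_apply]
    constructor
    · intro hi; exact ⟨⟨i.val, hi⟩, by ext; rfl⟩
    · rintro ⟨k, rfl⟩; exact k.isLt
  rw [hset, Finset.prod_map]
  rfl

lemma my_low_set {d h : ℕ} (hhd : h ≤ d) :
    Finset.univ.filter (fun i : Fin d => i.val < h)
      = Finset.map (Fin.castLEEmb hhd) Finset.univ := by
  ext i
  simp only [Finset.mem_filter, Finset.mem_univ, true_and, Finset.mem_map, Fin.castLEEmb_apply]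
  constructor
  · intro hi; exact ⟨⟨i.val, hi⟩, by ext; rfl⟩
  · rintro ⟨k, rfl⟩; exact k.isLt

lemma my_card_high {d h : ℕ} (hhd : h ≤ d) :
    (Finset.univ.filter (fun i : Fin d => ¬ i.val < h)).card = d - h := by
  have h1 : (Finset.univ.filter (fun i : Fin d => i.val < h)).card = h := by
    rw [my_low_set hhd, Finset.card_map, Finset.card_univ, Fintype.card_fin]
  have h2 := Finset.card_filter_add_card_filter_not
    (s := (Finset.univ : Finset (Fin d))) (p := fun i : Fin d => i.val < h)
  rw [Finset.card_univ, Fintype.card_fin, h1] at h2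
  omega

set_option maxHeartbeats 1600000 in
/-- For a `d`-dimensional standard normal vector `Z`, `1 ≤ h < d`, natural numbers
`m₁, …, m_h` with `m₁ ≥ 1`, `d′ = d − h`, and `κ ∈ (0,1)`:
`E[d ∏_k Z_k^{2m_k} / ‖Z‖²] ≤ (1/κ)(1 + h/d′) M₁ + 2(d′+h) exp(−(1−κ)²d′/8) M₂`,
with `M₁ = ∏_k E[Z_k^{2m_k}]` and `M₂ = E[Z₁^{2(m₁−1)}] ∏_{k≥2} E[Z_k^{2m_k}]`. -/
theorem statement16 {d h : ℕ} (hh : 0 < h) (hhd : h < d) (m : Fin h → ℕ)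
    (hm : 1 ≤ m ⟨0, hh⟩) (κ : ℝ) (hκ : κ ∈ Set.Ioo (0 : ℝ) 1) :
    (∫ z, (d : ℝ) * (∏ k : Fin h, z (Fin.castLE hhd.le k) ^ (2 * m k)) / (∑ i, z i ^ 2)
        ∂(stdGaussian d))
    ≤ (1 / κ) * (1 + (h : ℝ) / ((d : ℝ) - h)) *
        (∏ k : Fin h, ∫ z, z (Fin.castLE hhd.le k) ^ (2 * m k) ∂(stdGaussian d))
      + 2 * (((d : ℝ) - h) + h) * Real.exp (-((1 - κ) ^ 2 * ((d : ℝ) - h)) / 8) *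
        ((∫ z, z (Fin.castLE hhd.le ⟨0, hh⟩) ^ (2 * (m ⟨0, hh⟩ - 1)) ∂(stdGaussian d))
          * ∏ k ∈ Finset.univ.erase (⟨0, hh⟩ : Fin h),
              ∫ z, z (Fin.castLE hhd.le k) ^ (2 * m k) ∂(stdGaussian d)) := by
  obtain ⟨hκ0, hκ1⟩ := hκ
  set γ := gaussianReal 0 1 with hγ
  set k₀ : Fin h := ⟨0, hh⟩ with hk₀
  set u : ℝ := 1 - κ with hu_def
  have hu0 : 0 < u := by rw [hu_def]; linarith
  have hu1 : u < 1 := by rw [hu_def]; linarith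
  set l : ℝ := u / 2 with hl_def
  have hl0 : 0 < l := by rw [hl_def]; linarith
  have hdh : (h : ℝ) < (d : ℝ) := by exact_mod_cast hhd
  have hd0 : (0 : ℝ) < (d : ℝ) := lt_of_le_of_lt (Nat.cast_nonneg h) hdh
  have hd' : (0 : ℝ) < (d : ℝ) - h := by linarith
  have hnd' : ((d - h : ℕ) : ℝ) = (d : ℝ) - h := by
    rw [Nat.cast_sub hhd.le]
  set mm : Fin h → ℕ := fun k => if k = k₀ then m k₀ - 1 else m k with hmm
  set a : Fin d → ℝ → ℝ :=
    fun i x => if hi : i.val < h then x ^ (2 * m ⟨i.val, hi⟩) else 1 with ha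
  set b : Fin d → ℝ → ℝ :=
    fun i x => if hi : i.val < h then x ^ (2 * mm ⟨i.val, hi⟩) else Real.exp (-l * x^2) with hb
  set X : (Fin d → ℝ) → ℝ := fun z => ∏ k : Fin h, z (Fin.castLE hhd.le k) ^ (2 * m k) with hX
  set Y : (Fin d → ℝ) → ℝ := fun z => ∏ k : Fin h, z (Fin.castLE hhd.le k) ^ (2 * mm k) with hY
  set T : (Fin d → ℝ) → ℝ :=
    fun z => ∑ i ∈ Finset.univ.filter (fun i : Fin d => ¬ i.val < h), z i ^ 2 with hT_def
  set c₁ : ℝ := (d : ℝ) / (κ * ((d : ℝ) - h)) with hc₁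
  set c₂ : ℝ := (d : ℝ) * Real.exp (l * (κ * ((d : ℝ) - h))) with hc₂
  -- generic product split
  have hsplit : ∀ F : Fin d → ℝ, (∀ i : Fin d, ¬ i.val < h → F i = 1) →
      ∏ i, F i = ∏ k : Fin h, F (Fin.castLE hhd.le k) := by
    intro F hF
    rw [← Finset.prod_filter_mul_prod_filter_not Finset.univ (fun i : Fin d => i.val < h) F,
      my_prod_low hhd.le F, Finset.prod_eq_one (fun i hi => hF i (Finset.mem_filter.mp hi).2),
      mul_one]
  have hsplit2 : ∀ F : Fin d → ℝ,
      ∏ i, F i = (∏ k : Fin h, F (Fin.castLE hhd.le k)) *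
        ∏ i ∈ Finset.univ.filter (fun i : Fin d => ¬ i.val < h), F i := by
    intro F
    rw [← Finset.prod_filter_mul_prod_filter_not Finset.univ (fun i : Fin d => i.val < h) F,
      my_prod_low hhd.le F]
  have ha_low : ∀ (k : Fin h) (x : ℝ), a (Fin.castLE hhd.le k) x = x ^ (2 * m k) := by
    intro k x
    exact dif_pos k.isLt
  have hb_low : ∀ (k : Fin h) (x : ℝ), b (Fin.castLE hhd.le k) x = x ^ (2 * mm k) := by
    intro k x
    exact dif_pos k.isLt
  have ha_prod : ∀ z : Fin d → ℝ, (∏ i, a i (z i)) = X z := by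
    intro z
    rw [hsplit (fun i => a i (z i)) (fun i hi => dif_neg hi)]
    exact Finset.prod_congr rfl fun k _ => ha_low k _
  have hb_prod : ∀ z : Fin d → ℝ,
      (∏ i, b i (z i)) = Y z * Real.exp (-l * T z) := by
    intro z
    rw [hsplit2 (fun i => b i (z i))]
    congr 1
    · exact Finset.prod_congr rfl fun k _ => hb_low k _
    · rw [show (-l * T z) = ∑ i ∈ Finset.univ.filter (fun i : Fin d => ¬ i.val < h),
        (-l * z i ^ 2) from by rw [← Finset.mul_sum], Real.exp_sum]
      exact Finset.prod_congr rfl fun i hi => dif_neg (Finset.mem_filter.mp hi).2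
  have hX0 : ∀ z, 0 ≤ X z := by
    intro z
    apply Finset.prod_nonneg
    intro k _
    rw [pow_mul]
    exact pow_nonneg (sq_nonneg _) _
  have hY0 : ∀ z, 0 ≤ Y z := by
    intro z
    apply Finset.prod_nonneg
    intro k _
    rw [pow_mul]
    exact pow_nonneg (sq_nonneg _) _
  have hPb0 : ∀ z : Fin d → ℝ, 0 ≤ ∏ i, b i (z i) := by
    intro z
    apply Finset.prod_nonneg
    intro i _
    rw [hb]
    dsimp only
    split
    · rw [pow_mul]; exact pow_nonneg (sq_nonneg _) _
    · exact (Real.exp_pos _).le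
  have hT0 : ∀ z : Fin d → ℝ, 0 ≤ T z := fun z =>
    Finset.sum_nonneg fun i _ => sq_nonneg _
  have hTS : ∀ z : Fin d → ℝ, T z ≤ ∑ i, z i ^ 2 := fun z =>
    Finset.sum_le_sum_of_subset_of_nonneg (Finset.filter_subset _ _)
      (fun i _ _ => sq_nonneg _)
  -- key pointwise bound
  have key : ∀ z : Fin d → ℝ,
      (d : ℝ) * X z / (∑ i, z i ^ 2) ≤ c₁ * (∏ i, a i (z i)) + c₂ * (∏ i, b i (z i)) := by
    intro z
    have hκd' : 0 < κ * ((d : ℝ) - h) := mul_pos hκ0 hd'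
    rcases le_or_gt (κ * ((d : ℝ) - h)) (T z) with hc | hc
    · have hS : κ * ((d : ℝ) - h) ≤ ∑ i, z i ^ 2 := hc.trans (hTS z)
      have h1 : (d : ℝ) * X z / (∑ i, z i ^ 2) ≤ (d : ℝ) * X z / (κ * ((d : ℝ) - h)) :=
        div_le_div_of_nonneg_left (mul_nonneg hd0.le (hX0 z)) hκd' hS
      have h2 : (d : ℝ) * X z / (κ * ((d : ℝ) - h)) = c₁ * X z := by
        rw [hc₁]; ring
      have h3 : 0 ≤ c₂ * (∏ i, b i (z i)) := by
        apply mul_nonneg _ (hPb0 z)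
        rw [hc₂]
        exact mul_nonneg hd0.le (Real.exp_pos _).le
      rw [ha_prod z]
      linarith
    · -- small event
      have step1 : (d : ℝ) * X z / (∑ i, z i ^ 2) ≤ (d : ℝ) * Y z := by
        by_cases hz : z (Fin.castLE hhd.le k₀) = 0
        · have hXz : X z = 0 := by
            apply Finset.prod_eq_zero (Finset.mem_univ k₀)
            rw [hz]
            have hmk : 2 * m k₀ ≠ 0 := by
              have : 1 ≤ m k₀ := hm
              omega
            exact zero_pow hmk
          rw [hXz, mul_zero, zero_div]
          exact mul_nonneg hd0.le (hY0 z)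
        · have hz2 : 0 < z (Fin.castLE hhd.le k₀) ^ 2 := by positivity
          have hle : z (Fin.castLE hhd.le k₀) ^ 2 ≤ ∑ i, z i ^ 2 :=
            Finset.single_le_sum (fun i _ => sq_nonneg (z i))
              (Finset.mem_univ (Fin.castLE hhd.le k₀))
          have hXY : X z = Y z * z (Fin.castLE hhd.le k₀) ^ 2 := by
            rw [hX, hY]
            dsimp only
            rw [← Finset.mul_prod_erase Finset.univ
                (fun k => z (Fin.castLE hhd.le k) ^ (2 * m k)) (Finset.mem_univ k₀),
              ← Finset.mul_prod_erase Finset.univ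
                (fun k => z (Fin.castLE hhd.le k) ^ (2 * mm k)) (Finset.mem_univ k₀)]
            have herase : ∏ k ∈ Finset.univ.erase k₀, z (Fin.castLE hhd.le k) ^ (2 * mm k)
                = ∏ k ∈ Finset.univ.erase k₀, z (Fin.castLE hhd.le k) ^ (2 * m k) := by
              refine Finset.prod_congr rfl fun k hk => ?_
              rw [hmm]
              simp only [if_neg (Finset.ne_of_mem_erase hk)]
            rw [herase]
            have hpow : z (Fin.castLE hhd.le k₀) ^ (2 * m k₀)
                = z (Fin.castLE hhd.le k₀) ^ (2 * mm k₀) * z (Fin.castLE hhd.le k₀) ^ 2 := by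
              rw [← pow_add]
              congr 1
              have hmmk : mm k₀ = m k₀ - 1 := by rw [hmm]; simp
              have h1' : 1 ≤ m k₀ := hm
              rw [hmmk]
              omega
            rw [hpow]
            ring
          calc (d : ℝ) * X z / (∑ i, z i ^ 2)
              ≤ (d : ℝ) * X z / z (Fin.castLE hhd.le k₀) ^ 2 :=
                div_le_div_of_nonneg_left (mul_nonneg hd0.le (hX0 z)) hz2 hle
            _ = (d : ℝ) * Y z := by
                rw [hXY]
                field_simp
      have step2 : (d : ℝ) * Y z ≤ c₂ * (∏ i, b i (z i)) := by
        rw [hb_prod z, hc₂]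
        have hexp1 : 1 ≤ Real.exp (l * (κ * ((d : ℝ) - h))) * Real.exp (-l * T z) := by
          rw [← Real.exp_add]
          apply Real.one_le_exp
          nlinarith [hT0 z]
        nlinarith [hY0 z, mul_nonneg hd0.le (hY0 z), Real.exp_pos (l * (κ * ((d : ℝ) - h))),
          Real.exp_pos (-l * T z)]
      have h3 : 0 ≤ c₁ * (∏ i, a i (z i)) := by
        rw [ha_prod z]
        apply mul_nonneg _ (hX0 z)
        rw [hc₁]
        exact div_nonneg hd0.le (mul_nonneg hκ0.le hd'.le)
      linarith
  -- integrability
  have hInt_a : Integrable (fun z : Fin d → ℝ => ∏ i, a i (z i)) (stdGaussian d) := by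
    apply my_pi_integrable γ a
    intro i
    rw [ha]
    dsimp only
    split
    · exact my_integrable_pow_gauss _
    · exact integrable_const 1
  have hInt_b : Integrable (fun z : Fin d → ℝ => ∏ i, b i (z i)) (stdGaussian d) := by
    apply my_pi_integrable γ b
    intro i
    rw [hb]
    dsimp only
    split
    · exact my_integrable_pow_gauss _
    · exact my_integrable_exp_gauss hl0.le
  have hmono : (∫ z, (d : ℝ) * X z / (∑ i, z i ^ 2) ∂(stdGaussian d))
      ≤ ∫ z, (c₁ * (∏ i, a i (z i)) + c₂ * (∏ i, b i (z i))) ∂(stdGaussian d) := by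
    apply integral_mono_of_nonneg
    · filter_upwards with z
      exact div_nonneg (mul_nonneg hd0.le (hX0 z))
        (Finset.sum_nonneg fun i _ => sq_nonneg _)
    · exact (hInt_a.const_mul c₁).add (hInt_b.const_mul c₂)
    · filter_upwards with z using key z
  have hval : (∫ z, (c₁ * (∏ i, a i (z i)) + c₂ * (∏ i, b i (z i))) ∂(stdGaussian d))
      = c₁ * (∏ i, ∫ x, a i x ∂γ) + c₂ * (∏ i, ∫ x, b i x ∂γ) := by
    rw [integral_add (hInt_a.const_mul c₁) (hInt_b.const_mul c₂),
      MeasureTheory.integral_const_mul, MeasureTheory.integral_const_mul]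
    congr 1
    · congr 1
      exact my_pi_integral γ a
    · congr 1
      exact my_pi_integral γ b
  -- identify products of one-dim integrals
  have hprodA : (∏ i, ∫ x, a i x ∂γ) = ∏ k : Fin h, ∫ x, x ^ (2 * m k) ∂γ := by
    rw [hsplit (fun i => ∫ x, a i x ∂γ) ?_]
    · exact Finset.prod_congr rfl fun k _ => by rw [show (fun x => a (Fin.castLE hhd.le k) x)
        = fun x : ℝ => x ^ (2 * m k) from funext fun x => ha_low k x]
    · intro i hi
      rw [show (fun x => a i x) = fun _ : ℝ => (1:ℝ) from funext fun x => dif_neg hi]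
      simp
  have hexpint : (∫ x, Real.exp (-l * x^2) ∂γ) = (Real.sqrt (1 + u))⁻¹ := by
    have h12 : 1 + 2 * l = 1 + u := by rw [hl_def]; ring
    rw [hγ, my_exp_moment hl0, h12]
  have hprodB : (∏ i, ∫ x, b i x ∂γ)
      = (∏ k : Fin h, ∫ x, x ^ (2 * mm k) ∂γ) * ((Real.sqrt (1 + u))⁻¹) ^ (d - h) := by
    rw [hsplit2 (fun i => ∫ x, b i x ∂γ)]
    congr 1
    · exact Finset.prod_congr rfl fun k _ => by rw [show (fun x => b (Fin.castLE hhd.le k) x)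
        = fun x : ℝ => x ^ (2 * mm k) from funext fun x => hb_low k x]
    · rw [← my_card_high hhd.le, ← Finset.prod_const]
      refine Finset.prod_congr rfl fun i hi => ?_
      rw [show (fun x => b i x) = fun x : ℝ => Real.exp (-l * x^2) from
        funext fun x => dif_neg (Finset.mem_filter.mp hi).2]
      exact hexpint
  -- moments in d dimensions
  have hmom : ∀ (k : Fin h), (∫ z, z (Fin.castLE hhd.le k) ^ (2 * m k) ∂(stdGaussian d))
      = ∫ x, x ^ (2 * m k) ∂γ := fun k => my_moment_coord (Fin.castLE hhd.le k) (2 * m k)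
  have hmom0 : (∫ z, z (Fin.castLE hhd.le k₀) ^ (2 * (m k₀ - 1)) ∂(stdGaussian d))
      = ∫ x, x ^ (2 * mm k₀) ∂γ := by
    rw [hmm]
    simp only [if_pos rfl]
    exact my_moment_coord (Fin.castLE hhd.le k₀) (2 * (m k₀ - 1))
  -- first term equality
  have hterm1 : c₁ * (∏ k : Fin h, ∫ x, x ^ (2 * m k) ∂γ)
      = (1 / κ) * (1 + (h : ℝ) / ((d : ℝ) - h)) *
        (∏ k : Fin h, ∫ z, z (Fin.castLE hhd.le k) ^ (2 * m k) ∂(stdGaussian d)) := by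
    rw [Finset.prod_congr rfl fun k _ => hmom k]
    congr 1
    rw [hc₁]
    field_simp
    ring
  -- second term bound
  have hM0 : ∀ (k : Fin h), 0 ≤ ∫ x, x ^ (2 * m k) ∂γ := by
    intro k
    apply integral_nonneg
    intro x
    simp only [Pi.zero_apply]
    rw [pow_mul]
    exact pow_nonneg (sq_nonneg _) _
  have hN0 : 0 ≤ ∫ x, x ^ (2 * mm k₀) ∂γ := by
    apply integral_nonneg
    intro x
    simp only [Pi.zero_apply]
    rw [pow_mul]
    exact pow_nonneg (sq_nonneg _) _
  have hP2 : (∏ k : Fin h, ∫ x, x ^ (2 * mm k) ∂γ)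
      = (∫ x, x ^ (2 * mm k₀) ∂γ) * ∏ k ∈ Finset.univ.erase k₀, ∫ x, x ^ (2 * m k) ∂γ := by
    rw [← Finset.mul_prod_erase Finset.univ (fun k => ∫ x, x ^ (2 * mm k) ∂γ)
      (Finset.mem_univ k₀)]
    congr 1
    refine Finset.prod_congr rfl fun k hk => ?_
    rw [hmm]
    simp only [if_neg (Finset.ne_of_mem_erase hk)]
  have hP20 : 0 ≤ (∫ x, x ^ (2 * mm k₀) ∂γ) *
      ∏ k ∈ Finset.univ.erase k₀, ∫ x, x ^ (2 * m k) ∂γ :=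
    mul_nonneg hN0 (Finset.prod_nonneg fun k _ => hM0 k)
  have hscalar : c₂ * ((Real.sqrt (1 + u))⁻¹) ^ (d - h)
      ≤ 2 * (((d : ℝ) - h) + h) * Real.exp (-((1 - κ) ^ 2 * ((d : ℝ) - h)) / 8) := by
    have hstep : Real.exp (l * (κ * ((d : ℝ) - h))) * ((Real.sqrt (1 + u))⁻¹) ^ (d - h)
        ≤ Real.exp (-((1 - κ) ^ 2 * ((d : ℝ) - h)) / 8) := by
      have e1 : Real.exp (l * (κ * ((d : ℝ) - h)))
          = (Real.exp (u/2 * (1 - u))) ^ (d - h) := by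
        rw [← Real.exp_nat_mul]
        congr 1
        rw [hnd', hl_def, hu_def]
        ring
      have e2 : (Real.exp (u/2 * (1 - u)) * (Real.sqrt (1 + u))⁻¹) ^ (d - h)
          ≤ (Real.exp (-u^2/8)) ^ (d - h) := by
        apply pow_le_pow_left₀
        · positivity
        · exact my_factor_bound hu0 hu1
      have e3 : (Real.exp (-u^2/8)) ^ (d - h)
          = Real.exp (-((1 - κ) ^ 2 * ((d : ℝ) - h)) / 8) := by
        rw [← Real.exp_nat_mul]
        congr 1
        rw [hnd', hu_def]
        ring
      calc Real.exp (l * (κ * ((d : ℝ) - h))) * ((Real.sqrt (1 + u))⁻¹) ^ (d - h)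
          = (Real.exp (u/2 * (1 - u)) * (Real.sqrt (1 + u))⁻¹) ^ (d - h) := by
            rw [e1, mul_pow]
        _ ≤ (Real.exp (-u^2/8)) ^ (d - h) := e2
        _ = _ := e3
    rw [hc₂]
    have hd_eq : ((d : ℝ) - h) + h = (d : ℝ) := by ring
    rw [hd_eq]
    have hexp_pos : 0 < Real.exp (-((1 - κ) ^ 2 * ((d : ℝ) - h)) / 8) := Real.exp_pos _
    nlinarith [hstep, hd0, mul_le_mul_of_nonneg_left hstep hd0.le]
  -- final assembly
  calc (∫ z, (d : ℝ) * (∏ k : Fin h, z (Fin.castLE hhd.le k) ^ (2 * m k)) / (∑ i, z i ^ 2)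
        ∂(stdGaussian d))
      ≤ ∫ z, (c₁ * (∏ i, a i (z i)) + c₂ * (∏ i, b i (z i))) ∂(stdGaussian d) := hmono
    _ = c₁ * (∏ i, ∫ x, a i x ∂γ) + c₂ * (∏ i, ∫ x, b i x ∂γ) := hval
    _ = c₁ * (∏ k : Fin h, ∫ x, x ^ (2 * m k) ∂γ)
        + c₂ * (((∫ x, x ^ (2 * mm k₀) ∂γ) *
            ∏ k ∈ Finset.univ.erase k₀, ∫ x, x ^ (2 * m k) ∂γ)
          * ((Real.sqrt (1 + u))⁻¹) ^ (d - h)) := by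
        rw [hprodA, hprodB, hP2]
    _ ≤ (1 / κ) * (1 + (h : ℝ) / ((d : ℝ) - h)) *
          (∏ k : Fin h, ∫ z, z (Fin.castLE hhd.le k) ^ (2 * m k) ∂(stdGaussian d))
        + 2 * (((d : ℝ) - h) + h) * Real.exp (-((1 - κ) ^ 2 * ((d : ℝ) - h)) / 8) *
          ((∫ z, z (Fin.castLE hhd.le k₀) ^ (2 * (m k₀ - 1)) ∂(stdGaussian d))
            * ∏ k ∈ Finset.univ.erase k₀,
                ∫ z, z (Fin.castLE hhd.le k) ^ (2 * m k) ∂(stdGaussian d)) := by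
        rw [hterm1]
        apply add_le_add_right
        rw [hmom0, Finset.prod_congr rfl fun k (hk : k ∈ Finset.univ.erase k₀) => hmom k]
        calc c₂ * (((∫ x, x ^ (2 * mm k₀) ∂γ) *
              ∏ k ∈ Finset.univ.erase k₀, ∫ x, x ^ (2 * m k) ∂γ)
            * ((Real.sqrt (1 + u))⁻¹) ^ (d - h))
            = (c₂ * ((Real.sqrt (1 + u))⁻¹) ^ (d - h)) * ((∫ x, x ^ (2 * mm k₀) ∂γ) *
              ∏ k ∈ Finset.univ.erase k₀, ∫ x, x ^ (2 * m k) ∂γ) := by ring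
          _ ≤ (2 * (((d : ℝ) - h) + h) * Real.exp (-((1 - κ) ^ 2 * ((d : ℝ) - h)) / 8))
              * ((∫ x, x ^ (2 * mm k₀) ∂γ) *
              ∏ k ∈ Finset.univ.erase k₀, ∫ x, x ^ (2 * m k) ∂γ) :=
            mul_le_mul_of_nonneg_right hscalar hP20
end

section
/- Let Z = (Z₁, …, Z_d) be a d-dimensional standard normal random vector with d > 4, let α, β, γ, ω be indices with 1 ≤ α ≤ β ≤ γ ≤ ω ≤ d, and set d′ = d − 4. Then for every κ ∈ (0,1), E[ ( d Z_α Z_β Z_γ Z_ω / ‖Z‖² )² ] ≤ (1/κ²)(1 + 4/d′)² M₃ + 2(d′ + 4)² exp(−(1−κ)² d′/8) M₄, where M₃ = E[(Z_α Z_β Z_γ Z_ω)²] and M₄ = E[(Z_γ Z_ω)²]. -/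
open MeasureTheory ProbabilityTheory Real
open scoped ENNReal NNReal

section auxlemmas
lemma gauss01_pdf (x : ℝ) : gaussianPDFReal 0 1 x = (Real.sqrt (2*π))⁻¹ * Real.exp (-x^2/2) := by
  simp [gaussianPDFReal]

lemma integral_gauss01 (g : ℝ → ℝ) :
    ∫ x, g x ∂(gaussianReal 0 1)
      = ∫ x, ((Real.sqrt (2*π))⁻¹ * Real.exp (-x^2/2)) * g x := by
  rw [gaussianReal_of_var_ne_zero 0 one_ne_zero]
  have hmeas : Measurable (fun x => (gaussianPDFReal 0 1 x).toNNReal) :=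
    (measurable_gaussianPDFReal 0 1).real_toNNReal
  have hd : (gaussianPDF 0 1) = fun x => ((gaussianPDFReal 0 1 x).toNNReal : ℝ≥0∞) := by
    funext x; rfl
  rw [hd, integral_withDensity_eq_integral_smul hmeas]
  refine integral_congr_ae (Filter.Eventually.of_forall fun x => ?_)
  simp [NNReal.smul_def, Real.coe_toNNReal _ (gaussianPDFReal_nonneg 0 1 x), gauss01_pdf]
  exact Or.inl (by positivity)

lemma integrable_gauss01 (g : ℝ → ℝ) :
    Integrable g (gaussianReal 0 1)
      ↔ Integrable (fun x => ((Real.sqrt (2*π))⁻¹ * Real.exp (-x^2/2)) * g x) volume := by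
  rw [gaussianReal_of_var_ne_zero 0 one_ne_zero]
  have hmeas : Measurable (fun x => (gaussianPDFReal 0 1 x).toNNReal) :=
    (measurable_gaussianPDFReal 0 1).real_toNNReal
  have hd : (gaussianPDF 0 1) = fun x => ((gaussianPDFReal 0 1 x).toNNReal : ℝ≥0∞) := by
    funext x; rfl
  rw [hd, integrable_withDensity_iff_integrable_smul hmeas]
  constructor <;> intro h <;> refine h.congr (Filter.Eventually.of_forall fun x => ?_) <;>
    simp [NNReal.smul_def, Real.coe_toNNReal _ (gaussianPDFReal_nonneg 0 1 x), gauss01_pdf] <;> exact Or.inl (by positivity)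

lemma integrable_pow_gauss (n : ℕ) : Integrable (fun x : ℝ => x ^ n) (gaussianReal 0 1) := by
  rw [integrable_gauss01]
  have h : Integrable (fun x : ℝ => x ^ n * Real.exp (-(1/2 : ℝ) * x^2)) volume := by
    have := integrable_rpow_mul_exp_neg_mul_sq (b := (1/2:ℝ)) (by norm_num) (s := (n:ℝ))
      (lt_of_lt_of_le (by norm_num) (Nat.cast_nonneg n))
    simpa [Real.rpow_natCast] using this
  refine ((h.const_mul ((Real.sqrt (2*π))⁻¹)).congr (Filter.Eventually.of_forall fun x => ?_))
  dsimp only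
  have : -x^2/2 = -(1/2 : ℝ)*x^2 := by ring
  rw [this]; ring

lemma integrable_exp_gauss {l : ℝ} (hl : 0 < l) :
    Integrable (fun x : ℝ => Real.exp (-(l * x^2))) (gaussianReal 0 1) := by
  rw [integrable_gauss01]
  have h : Integrable (fun x : ℝ => Real.exp (-(l + 1/2) * x^2)) volume :=
    integrable_exp_neg_mul_sq (by linarith)
  refine ((h.const_mul ((Real.sqrt (2*π))⁻¹)).congr (Filter.Eventually.of_forall fun x => ?_))
  dsimp only
  rw [mul_assoc, ← Real.exp_add]
  congr 1
  ring

lemma integral_exp_gauss {l : ℝ} (hl : 0 < l) :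
    ∫ x, Real.exp (-(l * x^2)) ∂(gaussianReal 0 1) = 1 / Real.sqrt (1 + 2*l) := by
  rw [integral_gauss01]
  have heq : ∀ x : ℝ, ((Real.sqrt (2*π))⁻¹ * Real.exp (-x^2/2)) * Real.exp (-(l * x^2))
      = (Real.sqrt (2*π))⁻¹ * Real.exp (-(l + 1/2) * x^2) := by
    intro x; rw [mul_assoc, ← Real.exp_add]; congr 2; ring
  simp only [heq]
  rw [integral_const_mul, integral_gaussian]
  rw [show (1:ℝ)/Real.sqrt (1+2*l) = Real.sqrt ((1+2*l)⁻¹) by rw [Real.sqrt_inv, one_div],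
    ← Real.sqrt_inv (2*π), ← Real.sqrt_mul (by positivity)]
  congr 1
  have hπ := Real.pi_pos
  field_simp
  ring
lemma core_exp {u : ℝ} (hu0 : 0 < u) (hu1 : u ≤ 1) :
    Real.exp (u - 3/4*u^2) ≤ 1 + u := by
  set x := u - 3/4*u^2 with hx
  have hx0 : 0 ≤ x := by rw [hx]; nlinarith
  have hxu : x ≤ u := by rw [hx]; nlinarith
  have hx1 : |x| ≤ 1 := by rw [abs_of_nonneg hx0]; linarith
  have hb := Real.exp_bound hx1 (n := 3) (by norm_num)
  have hsum : ∑ i ∈ Finset.range 3, x^i/(Nat.factorial i) = 1 + x + x^2/2 := by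
    simp [Finset.sum_range_succ, Nat.factorial]
  rw [hsum, abs_of_nonneg hx0] at hb
  have h2 := (abs_le.1 hb).2
  norm_num [Nat.factorial] at h2
  have hpoly : 1 + x + x^2/2 + x^3 * (2/9) ≤ 1 + u := by
    rw [hx]
    nlinarith [sq_nonneg u, sq_nonneg (1-u), mul_pos hu0 hu0, pow_le_one₀ hu0.le hu1 (n := 3)]
  nlinarith

lemma core_tail {κ : ℝ} (hκ0 : 0 < κ) (hκ1 : κ < 1) (m : ℕ) :
    Real.exp ((1-κ)/2 * κ * m) * (1/Real.sqrt (1+2*((1-κ)/2)))^m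
      ≤ 2 * Real.exp (-((1-κ)^2 * m)/8) := by
  set u : ℝ := 1 - κ with hu
  have hu0 : 0 < u := by rw [hu]; linarith
  have hu1 : u ≤ 1 := by rw [hu]; linarith
  have h1u : (0:ℝ) < 1 + u := by linarith
  have harg : 1 + 2*((1-κ)/2) = 1 + u := by rw [hu]; ring
  rw [harg]
  have hsq : (1/Real.sqrt (1+u))^2 = 1/(1+u) := by
    rw [div_pow, one_pow, Real.sq_sqrt h1u.le]
  have hinv : 1/(1+u) ≤ Real.exp (-(u*κ + u^2/4)) := by
    rw [Real.exp_neg, one_div]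
    refine inv_anti₀ (Real.exp_pos _) ?_
    calc Real.exp (u*κ + u^2/4) = Real.exp (u - 3/4*u^2) := by rw [hu]; ring_nf
      _ ≤ 1 + u := core_exp hu0 hu1
  set A : ℝ := Real.exp ((1-κ)/2 * κ * m) * (1/Real.sqrt (1+u))^m with hA
  set B : ℝ := Real.exp (-((1-κ)^2 * m)/8) with hB
  have hA0 : 0 ≤ A := by rw [hA]; positivity
  have hB0 : 0 < B := Real.exp_pos _
  have hexpA : Real.exp ((1-κ)/2*κ*m) ^ 2 = Real.exp ((1-κ)*κ*m) := by
    rw [sq, ← Real.exp_add]; congr 1; ring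
  have hpowA : ((1/Real.sqrt (1+u))^m)^2 = (1/(1+u))^m := by
    rw [← pow_mul, mul_comm m 2, pow_mul, hsq]
  have hBsq : B^2 = Real.exp (-((1-κ)^2*m)/4) := by
    rw [hB, sq, ← Real.exp_add]; congr 1; ring
  have hEm : (Real.exp (-(u*κ + u^2/4)))^m = Real.exp (-(u*κ+u^2/4) * m) := by
    rw [← Real.exp_nat_mul]; congr 1; ring
  have key : A^2 ≤ B^2 := by
    calc A^2 = Real.exp ((1-κ)*κ*m) * (1/(1+u))^m := by rw [hA, mul_pow, hexpA, hpowA]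
      _ ≤ Real.exp ((1-κ)*κ*m) * (Real.exp (-(u*κ+u^2/4)))^m :=
          mul_le_mul_of_nonneg_left (pow_le_pow_left₀ (by positivity) hinv m) (Real.exp_pos _).le
      _ = Real.exp ((1-κ)*κ*m + (-(u*κ+u^2/4) * m)) := by rw [hEm, ← Real.exp_add]
      _ = B^2 := by rw [hBsq]; congr 1; rw [hu]; ring
  have hAB : A ≤ B := le_of_pow_le_pow_left₀ (by norm_num) hB0.le key
  linarith
lemma prod_pow_single {d : ℕ} (z : Fin d → ℝ) (w : Fin d) :
    ∏ i, (z i)^(if i = w then 2 else 0) = (z w)^2 := by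
  have h : ∀ i : Fin d, (z i)^(if i = w then 2 else 0) = (if i = w then (z w)^2 else 1) := by
    intro i; split_ifs with hh <;> simp [hh]
  rw [Finset.prod_congr rfl (fun i _ => h i)]
  simp

lemma prod_two {d : ℕ} (z : Fin d → ℝ) (c e : Fin d) :
    ∏ i, (z i)^((if i = c then 2 else 0) + (if i = e then 2 else 0)) = (z c * z e)^2 := by
  simp only [pow_add, Finset.prod_mul_distrib, prod_pow_single]
  ring

lemma prod_four {d : ℕ} (z : Fin d → ℝ) (a b c e : Fin d) :
    ∏ i, (z i)^((if i = a then 2 else 0) + (if i = b then 2 else 0)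
      + (if i = c then 2 else 0) + (if i = e then 2 else 0))
      = (z a * z b * z c * z e)^2 := by
  simp only [pow_add, Finset.prod_mul_distrib, prod_pow_single]
  ring

lemma prod_ite_compl {d : ℕ} (s : Finset (Fin d)) (g : Fin d → ℝ) :
    ∏ i, (if i ∈ s then (1:ℝ) else g i) = ∏ i ∈ sᶜ, g i := by
  rw [← Finset.prod_mul_prod_compl s]
  rw [Finset.prod_eq_one (fun i hi => if_pos hi)]
  rw [Finset.prod_congr rfl (fun i hi => if_neg (Finset.mem_compl.1 hi))]
  ring
lemma aux_pi_integral {d : ℕ} (f : Fin d → ℝ → ℝ) :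
    (∫ z, ∏ i, f i (z i) ∂(stdGaussian d)) = ∏ i, ∫ x, f i x ∂(gaussianReal 0 1) := by
  have := MeasureTheory.integral_fintype_prod_eq_prod (E := fun _ => ℝ) f
    (μ := fun _ => gaussianReal 0 1)
  exact this

lemma aux_pi_integrable {d : ℕ} (f : Fin d → ℝ → ℝ)
    (hf : ∀ i, Integrable (f i) (gaussianReal 0 1)) :
    Integrable (fun z => ∏ i, f i (z i)) (stdGaussian d) := by
  have := MeasureTheory.Integrable.fintype_prod (f := f) (μ := fun _ => gaussianReal 0 1) hf
  exact this

def E2' {d : ℕ} (c e i : Fin d) : ℕ := (if i = c then 2 else 0) + (if i = e then 2 else 0)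

def E4' {d : ℕ} (a b c e i : Fin d) : ℕ :=
  (if i = a then 2 else 0) + (if i = b then 2 else 0)
    + (if i = c then 2 else 0) + (if i = e then 2 else 0)

lemma prod_E2 {d : ℕ} (z : Fin d → ℝ) (c e : Fin d) :
    ∏ i, (z i)^(E2' c e i) = (z c * z e)^2 := by
  simpa [E2'] using prod_two z c e

lemma prod_E4 {d : ℕ} (z : Fin d → ℝ) (a b c e : Fin d) :
    ∏ i, (z i)^(E4' a b c e i) = (z a * z b * z c * z e)^2 := by
  simpa [E4'] using prod_four z a b c e

end auxlemmas

set_option maxHeartbeats 2000000 in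
/-- For a `d`-dimensional standard normal vector `Z` with `d > 4`, indices
`α ≤ β ≤ γ ≤ ω`, `d′ = d − 4`, and `κ ∈ (0,1)`:
`E[(d Z_α Z_β Z_γ Z_ω / ‖Z‖²)²] ≤ (1/κ²)(1 + 4/d′)² M₃ + 2(d′+4)² exp(−(1−κ)²d′/8) M₄`,
with `M₃ = E[(Z_α Z_β Z_γ Z_ω)²]` and `M₄ = E[(Z_γ Z_ω)²]`. -/
theorem statement17 {d : ℕ} (hd : 4 < d) (a b c e : Fin d)
    (hab : a ≤ b) (hbc : b ≤ c) (hce : c ≤ e) (κ : ℝ) (hκ : κ ∈ Set.Ioo (0 : ℝ) 1) :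
    (∫ z, ((d : ℝ) * z a * z b * z c * z e / (∑ i, z i ^ 2)) ^ 2 ∂(stdGaussian d))
    ≤ (1 / κ ^ 2) * (1 + 4 / ((d : ℝ) - 4)) ^ 2 *
        (∫ z, (z a * z b * z c * z e) ^ 2 ∂(stdGaussian d))
      + 2 * (((d : ℝ) - 4) + 4) ^ 2 * Real.exp (-((1 - κ) ^ 2 * ((d : ℝ) - 4)) / 8) *
        (∫ z, (z c * z e) ^ 2 ∂(stdGaussian d)) := by
  obtain ⟨hκ0, hκ1⟩ := hκ
  have hd5 : (5:ℝ) ≤ (d:ℝ) := by exact_mod_cast hd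
  have hnR0 : (0:ℝ) < (d:ℝ) - 4 := by linarith
  set l : ℝ := (1-κ)/2 with hl
  have hl0 : 0 < l := by rw [hl]; linarith
  set s : Finset (Fin d) := {a, b, c, e} with hs
  have hcs : c ∈ s := by simp [hs]
  have hes : e ∈ s := by simp [hs]
  have hr0 : 0 < Real.sqrt (1 + 2*l) := Real.sqrt_pos.2 (by linarith)
  set r : ℝ := 1 / Real.sqrt (1 + 2*l) with hr
  have hr0' : 0 ≤ r := by rw [hr]; positivity
  have hr1 : r ≤ 1 := by
    rw [hr, div_le_one hr0]
    nlinarith [Real.sq_sqrt (show (0:ℝ) ≤ 1+2*l by linarith), Real.sqrt_nonneg (1+2*l)]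
  set C1 : ℝ := (1 / κ ^ 2) * (1 + 4 / ((d:ℝ) - 4))^2 with hC1
  set K : ℝ := (d:ℝ)^2 * Real.exp (l * κ * ((d:ℝ)-4)) with hK
  have hC10 : 0 ≤ C1 := by rw [hC1]; positivity
  have hK0 : 0 ≤ K := by rw [hK]; positivity
  -- pointwise bound
  have hpoint : ∀ z : Fin d → ℝ,
      ((d:ℝ) * z a * z b * z c * z e / (∑ i, z i ^ 2)) ^ 2
        ≤ C1 * (z a * z b * z c * z e)^2
          + K * ((z c * z e)^2 * Real.exp (-(l * ∑ i ∈ sᶜ, (z i)^2))) := by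
    intro z
    have hS0 : (0:ℝ) ≤ ∑ i, (z i)^2 := Finset.sum_nonneg fun i _ => sq_nonneg _
    have hTS : (∑ i ∈ sᶜ, (z i)^2) ≤ ∑ i, (z i)^2 :=
      Finset.sum_le_sum_of_subset_of_nonneg (Finset.subset_univ _) (fun i _ _ => sq_nonneg _)
    have hsingle : ∀ w : Fin d, (z w)^2 ≤ ∑ i, (z i)^2 := fun w =>
      Finset.single_le_sum (f := fun i => (z i)^2) (fun i _ => sq_nonneg _) (Finset.mem_univ w)
    have hfeq : ((d:ℝ) * z a * z b * z c * z e / (∑ i, z i ^ 2)) ^ 2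
        = ((d:ℝ)/(∑ i, z i ^ 2))^2 * (z a * z b * z c * z e)^2 := by ring
    by_cases hcase : κ * ((d:ℝ)-4) ≤ ∑ i ∈ sᶜ, (z i)^2
    · have hSpos : (0:ℝ) < ∑ i, (z i)^2 :=
        lt_of_lt_of_le (by positivity) (le_trans hcase hTS)
      have hdiv : (d:ℝ)/(∑ i, z i ^ 2) ≤ (d:ℝ)/(κ * ((d:ℝ)-4)) := by
        apply div_le_div_of_nonneg_left (by positivity) (by positivity)
        exact le_trans hcase hTS
      have h1 : ((d:ℝ)/(∑ i, z i ^ 2))^2 ≤ C1 := by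
        calc ((d:ℝ)/(∑ i, z i ^ 2))^2 ≤ ((d:ℝ)/(κ*((d:ℝ)-4)))^2 :=
              pow_le_pow_left₀ (by positivity) hdiv 2
          _ = C1 := by
              rw [hC1]
              field_simp
              ring
      calc ((d:ℝ) * z a * z b * z c * z e / (∑ i, z i ^ 2)) ^ 2
          = ((d:ℝ)/(∑ i, z i ^ 2))^2 * (z a * z b * z c * z e)^2 := hfeq
        _ ≤ C1 * (z a * z b * z c * z e)^2 :=
            mul_le_mul_of_nonneg_right h1 (sq_nonneg _)
        _ ≤ _ := le_add_of_nonneg_right (by positivity)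
    · push_neg at hcase
      by_cases hSz : (∑ i, z i ^ 2) = (0:ℝ)
      · rw [hSz, div_zero]
        have : ((0:ℝ))^2 = 0 := by norm_num
        rw [this]
        positivity
      · have hSpos : (0:ℝ) < ∑ i, (z i)^2 := lt_of_le_of_ne hS0 (Ne.symm hSz)
        have hY : ((d:ℝ) * z a * z b * z c * z e / (∑ i, z i ^ 2))^2
            ≤ (d:ℝ)^2 * (z c * z e)^2 := by
          rw [hfeq, div_pow, div_mul_eq_mul_div, div_le_iff₀ (by positivity)]
          have h1 : (z a)^2 * (z b)^2 ≤ (∑ i, (z i)^2) * (∑ i, (z i)^2) :=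
            mul_le_mul (hsingle a) (hsingle b) (sq_nonneg _) hS0
          nlinarith [mul_le_mul_of_nonneg_left h1
            (mul_nonneg (sq_nonneg ((d:ℝ))) (sq_nonneg (z c * z e)))]
        have hexp1 : (1:ℝ) ≤ Real.exp (l*κ*((d:ℝ)-4)) * Real.exp (-(l * ∑ i ∈ sᶜ, (z i)^2)) := by
          rw [← Real.exp_add]
          have harg : (0:ℝ) ≤ l*κ*((d:ℝ)-4) + -(l * ∑ i ∈ sᶜ, (z i)^2) := by
            have h0 := mul_nonneg hl0.le (sub_nonneg.2 hcase.le)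
            have h2 : l*(κ*((d:ℝ)-4) - ∑ i ∈ sᶜ, (z i)^2)
                = l*κ*((d:ℝ)-4) + -(l * ∑ i ∈ sᶜ, (z i)^2) := by ring
            linarith
          linarith [Real.add_one_le_exp (l*κ*((d:ℝ)-4) + -(l * ∑ i ∈ sᶜ, (z i)^2))]
        calc ((d:ℝ) * z a * z b * z c * z e / (∑ i, z i ^ 2)) ^ 2
            ≤ (d:ℝ)^2 * (z c * z e)^2 := hY
          _ = ((d:ℝ)^2 * (z c * z e)^2) * 1 := (mul_one _).symm
          _ ≤ ((d:ℝ)^2 * (z c * z e)^2) *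
              (Real.exp (l*κ*((d:ℝ)-4)) * Real.exp (-(l * ∑ i ∈ sᶜ, (z i)^2))) :=
              mul_le_mul_of_nonneg_left hexp1 (by positivity)
          _ = K * ((z c * z e)^2 * Real.exp (-(l * ∑ i ∈ sᶜ, (z i)^2))) := by
              rw [hK]; ring
          _ ≤ _ := le_add_of_nonneg_left (by positivity)
  -- integrability
  have hIX : Integrable (fun z : Fin d → ℝ => (z a * z b * z c * z e)^2) (stdGaussian d) := by
    have hfun : (fun z : Fin d → ℝ => (z a*z b*z c*z e)^2)
        = fun z => ∏ i, (z i) ^ (E4' a b c e i) := by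
      funext z; rw [prod_E4 z a b c e]
    rw [hfun]
    exact aux_pi_integrable (fun i x => x ^ (E4' a b c e i))
      (fun i => integrable_pow_gauss _)
  have hIh : ∀ i : Fin d, Integrable
      (fun x : ℝ => x ^ (E2' c e i) * (if i ∈ s then 1 else Real.exp (-(l * x^2))))
      (gaussianReal 0 1) := by
    intro i
    by_cases hi : i ∈ s
    · simp only [hi, if_true, mul_one]
      exact integrable_pow_gauss _
    · have hic : i ≠ c := fun hh => hi (hh ▸ hcs)
      have hie : i ≠ e := fun hh => hi (hh ▸ hes)
      have hE0 : E2' c e i = 0 := by simp [E2', hic, hie]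
      simp only [hi, if_false, hE0, pow_zero, one_mul]
      exact integrable_exp_gauss hl0
  have hfunG : (fun z : Fin d → ℝ => (z c*z e)^2 * Real.exp (-(l * ∑ i ∈ sᶜ, (z i)^2)))
      = fun z => ∏ i, ((z i) ^ (E2' c e i) * (if i ∈ s then 1 else Real.exp (-(l * (z i)^2)))) := by
    funext z
    rw [Finset.prod_mul_distrib, prod_E2,
      prod_ite_compl s (fun i => Real.exp (-(l * (z i)^2))), ← Real.exp_sum]
    congr 1
    rw [Finset.mul_sum, ← Finset.sum_neg_distrib]
  have hIG : Integrable (fun z : Fin d → ℝ =>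
      (z c * z e)^2 * Real.exp (-(l * ∑ i ∈ sᶜ, (z i)^2))) (stdGaussian d) := by
    rw [hfunG]
    exact aux_pi_integrable
      (fun i x => x ^ (E2' c e i) * (if i ∈ s then 1 else Real.exp (-(l * x^2)))) hIh
  -- value of the Gaussian-weighted integral
  have hM4eq : ∫ z, (z c*z e)^2 * Real.exp (-(l * ∑ i ∈ sᶜ, (z i)^2)) ∂(stdGaussian d)
      = (∫ z, (z c * z e)^2 ∂(stdGaussian d)) * r ^ (sᶜ.card) := by
    rw [hfunG, aux_pi_integral
      (fun i x => x ^ (E2' c e i) * (if i ∈ s then 1 else Real.exp (-(l * x^2))))]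
    have hint : ∀ i : Fin d,
        (∫ x, x ^ (E2' c e i) * (if i ∈ s then 1 else Real.exp (-(l * x^2))) ∂(gaussianReal 0 1))
        = (∫ x, x ^ (E2' c e i) ∂(gaussianReal 0 1)) * (if i ∈ s then 1 else r) := by
      intro i
      by_cases hi : i ∈ s
      · simp only [hi, if_true, mul_one]
      · have hic : i ≠ c := fun hh => hi (hh ▸ hcs)
        have hie : i ≠ e := fun hh => hi (hh ▸ hes)
        have hE0 : E2' c e i = 0 := by simp [E2', hic, hie]
        simp only [hi, if_false, hE0, pow_zero, one_mul]
        rw [integral_exp_gauss hl0, hr]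
        have hone : ∫ _x, (1:ℝ) ∂(gaussianReal 0 1) = 1 := by simp
        rw [hone, one_mul]
    rw [Finset.prod_congr rfl (fun i _ => hint i), Finset.prod_mul_distrib]
    congr 1
    · rw [← aux_pi_integral (fun i x => x ^ (E2' c e i))]
      refine integral_congr_ae (Filter.Eventually.of_forall fun z => ?_)
      exact prod_E2 z c e
    · rw [prod_ite_compl s (fun _ => r), Finset.prod_const]
  -- monotone step
  have hintg : Integrable (fun z : Fin d → ℝ =>
      C1 * (z a * z b * z c * z e)^2
        + K * ((z c * z e)^2 * Real.exp (-(l * ∑ i ∈ sᶜ, (z i)^2)))) (stdGaussian d) :=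
    (hIX.const_mul C1).add (hIG.const_mul K)
  have hmono : (∫ z, ((d : ℝ) * z a * z b * z c * z e / (∑ i, z i ^ 2)) ^ 2 ∂(stdGaussian d))
      ≤ C1 * (∫ z, (z a * z b * z c * z e) ^ 2 ∂(stdGaussian d))
        + K * ((∫ z, (z c * z e) ^ 2 ∂(stdGaussian d)) * r ^ (sᶜ.card)) := by
    calc (∫ z, ((d : ℝ) * z a * z b * z c * z e / (∑ i, z i ^ 2)) ^ 2 ∂(stdGaussian d))
        ≤ ∫ z, (C1 * (z a * z b * z c * z e)^2
            + K * ((z c * z e)^2 * Real.exp (-(l * ∑ i ∈ sᶜ, (z i)^2)))) ∂(stdGaussian d) :=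
          integral_mono_of_nonneg (Filter.Eventually.of_forall fun z => sq_nonneg _)
            hintg (Filter.Eventually.of_forall hpoint)
      _ = C1 * (∫ z, (z a * z b * z c * z e) ^ 2 ∂(stdGaussian d))
          + K * ((∫ z, (z c * z e) ^ 2 ∂(stdGaussian d)) * r ^ (sᶜ.card)) := by
          rw [integral_add (hIX.const_mul C1) (hIG.const_mul K),
            integral_const_mul, integral_const_mul, hM4eq]
  -- tail estimate
  have hM40 : 0 ≤ ∫ z, (z c * z e) ^ 2 ∂(stdGaussian d) := integral_nonneg fun z => sq_nonneg _
  have hscard : s.card ≤ 4 := by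
    rw [hs]
    refine le_trans (Finset.card_insert_le _ _) ?_
    refine le_trans (Nat.add_le_add_right (Finset.card_insert_le _ _) 1) ?_
    refine le_trans (Nat.add_le_add_right (Nat.add_le_add_right (Finset.card_insert_le _ _) 1) 1) ?_
    simp
  have hcard : d - 4 ≤ sᶜ.card := by
    rw [Finset.card_compl, Fintype.card_fin]
    exact Nat.sub_le_sub_left hscard d
  have hrk : r ^ (sᶜ.card) ≤ r ^ (d - 4) := pow_le_pow_of_le_one hr0' hr1 hcard
  have hcast : ((d - 4 : ℕ) : ℝ) = (d:ℝ) - 4 := by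
    push_cast [Nat.cast_sub (by omega : 4 ≤ d)]
    ring
  have htail := core_tail hκ0 hκ1 (d - 4)
  rw [hcast] at htail
  -- htail : Real.exp ((1-κ)/2 * κ * ((d:ℝ)-4)) * (1/Real.sqrt (1+2*((1-κ)/2)))^(d-4)
  --           ≤ 2 * Real.exp (-((1-κ)^2 * ((d:ℝ)-4))/8)
  have hKtail : K * ((∫ z, (z c * z e) ^ 2 ∂(stdGaussian d)) * r ^ (sᶜ.card))
      ≤ 2 * (((d : ℝ) - 4) + 4) ^ 2 * Real.exp (-((1 - κ) ^ 2 * ((d : ℝ) - 4)) / 8) *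
        (∫ z, (z c * z e) ^ 2 ∂(stdGaussian d)) := by
    have h1 : K * ((∫ z, (z c * z e) ^ 2 ∂(stdGaussian d)) * r ^ (sᶜ.card))
        ≤ K * ((∫ z, (z c * z e) ^ 2 ∂(stdGaussian d)) * r ^ (d - 4)) := by
      apply mul_le_mul_of_nonneg_left (mul_le_mul_of_nonneg_left hrk hM40) hK0
    refine le_trans h1 ?_
    have h2 : Real.exp (l * κ * ((d:ℝ)-4)) * r ^ (d-4)
        ≤ 2 * Real.exp (-((1 - κ) ^ 2 * ((d : ℝ) - 4)) / 8) := by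
      have : l * κ * ((d:ℝ)-4) = (1-κ)/2 * κ * ((d:ℝ)-4) := by rw [hl]
      rw [this, hr, hl]
      exact htail
    calc K * ((∫ z, (z c * z e) ^ 2 ∂(stdGaussian d)) * r ^ (d - 4))
        = ((d:ℝ)^2 * (∫ z, (z c * z e) ^ 2 ∂(stdGaussian d)))
            * (Real.exp (l * κ * ((d:ℝ)-4)) * r ^ (d-4)) := by rw [hK]; ring
      _ ≤ ((d:ℝ)^2 * (∫ z, (z c * z e) ^ 2 ∂(stdGaussian d)))
            * (2 * Real.exp (-((1 - κ) ^ 2 * ((d : ℝ) - 4)) / 8)) := by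
          apply mul_le_mul_of_nonneg_left h2 (by positivity)
      _ = 2 * (((d : ℝ) - 4) + 4) ^ 2 * Real.exp (-((1 - κ) ^ 2 * ((d : ℝ) - 4)) / 8) *
            (∫ z, (z c * z e) ^ 2 ∂(stdGaussian d)) := by ring
  calc (∫ z, ((d : ℝ) * z a * z b * z c * z e / (∑ i, z i ^ 2)) ^ 2 ∂(stdGaussian d))
      ≤ C1 * (∫ z, (z a * z b * z c * z e) ^ 2 ∂(stdGaussian d))
        + K * ((∫ z, (z c * z e) ^ 2 ∂(stdGaussian d)) * r ^ (sᶜ.card)) := hmono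
    _ ≤ _ := by
        rw [hC1]
        exact add_le_add_right hKtail _
end
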